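/- arXiv:0707.4240 — 3 statements merged into one kernel-verified Lean document; each statement's English description precedes it below -/
import Mathlib

section
/- Let H be a separable infinite-dimensional complex Hilbert space and let N be a seminorm on the ideal J(H) of finite-rank bounded operators on H such that N(U T) = N(T) for every T ∈ J(H) and every unitary operator U ∈ B(H). Then for every A ∈ B(H) and every T ∈ J(H), the composition A T lies in J(H) and N(A T) ≤ ‖A‖ · N(T), where ‖A‖ is the operator norm of A. -/
set_option synthInstance.maxHeartbeats 1000000
set_option maxHeartbeats 1000000
set_option linter.unusedSectionVars false
set_option linter.unusedVariables false

/-- A bounded operator has finite rank if its range is a finite-dimensional subspace. -/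
def FiniteRank {H : Type*} [NormedAddCommGroup H] [InnerProductSpace ℂ H]
    (T : H →L[ℂ] H) : Prop :=
  FiniteDimensional ℂ (LinearMap.range (T : H →ₗ[ℂ] H))

section Aux

variable {H : Type*} [NormedAddCommGroup H] [InnerProductSpace ℂ H] [CompleteSpace H]

omit [CompleteSpace H] in
lemma finiteRank_comp {T : H →L[ℂ] H} (A : H →L[ℂ] H) (hT : FiniteRank T) :
    FiniteRank (A ∘L T) := by
  unfold FiniteRank at *
  haveI := hT
  have h1 : LinearMap.range ((A ∘L T : H →L[ℂ] H) : H →ₗ[ℂ] H) ≤ Submodule.map (A : H →ₗ[ℂ] H) (LinearMap.range (T : H →ₗ[ℂ] H)) := by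
    rintro x ⟨y, rfl⟩
    exact ⟨T y, ⟨y, rfl⟩, rfl⟩
  have h2 : FiniteDimensional ℂ (Submodule.map (A : H →ₗ[ℂ] H) (LinearMap.range (T : H →ₗ[ℂ] H))) :=
    Module.Finite.map (R := ℂ) (LinearMap.range (T : H →ₗ[ℂ] H)) (A : H →ₗ[ℂ] H)
  exact Submodule.finiteDimensional_of_le h1

omit [CompleteSpace H] in
lemma finiteRank_smul (c : ℂ) {T : H →L[ℂ] H} (hT : FiniteRank T) : FiniteRank (c • T) := by
  unfold FiniteRank at *
  haveI := hT
  have h : LinearMap.range ((c • T : H →L[ℂ] H) : H →ₗ[ℂ] H) ≤ LinearMap.range (T : H →ₗ[ℂ] H) := by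
    rintro x ⟨y, rfl⟩
    exact ⟨c • y, by simp⟩
  exact Submodule.finiteDimensional_of_le h

omit [CompleteSpace H] in
lemma finiteRank_zero : FiniteRank (0 : H →L[ℂ] H) := by
  have h : LinearMap.range ((0 : H →L[ℂ] H) : H →ₗ[ℂ] H) ≤ ⊥ := by rintro x ⟨y, rfl⟩; simp
  exact Submodule.finiteDimensional_of_le (S₂ := ⊥) h


section WithNontrivial
variable [Nontrivial H]

lemma selfAdjoint_mean_unitary {S : H →L[ℂ] H} (hS : IsSelfAdjoint S) (hn : ‖S‖ ≤ 1) :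
    ∃ U : H →L[ℂ] H, U ∈ unitary (H →L[ℂ] H) ∧ S = (1/2 : ℂ) • (U + star U) := by
  set f : ℝ → ℝ := fun x => Real.sqrt (1 - x^2) with hf
  have hfc : ContinuousOn f (spectrum ℝ S) :=
    (Real.continuous_sqrt.comp (by continuity)).continuousOn
  set D : H →L[ℂ] H := cfc f S with hDdef
  have hD : IsSelfAdjoint D := cfc_predicate _ S
  have hspec : ∀ x ∈ spectrum ℝ S, x^2 ≤ 1 := by
    intro x hx
    have h1 := spectrum.norm_le_norm_of_mem hx
    have h2 : |x| ≤ 1 := le_trans h1 hn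
    nlinarith [abs_nonneg x, sq_abs x]
  have hSS : S * S = cfc (fun x : ℝ => x * x) S := by
    have h := cfc_mul (fun x : ℝ => x) (fun x : ℝ => x) S
    rw [cfc_id' ℝ S] at h
    exact h.symm
  have hDD : D * D = cfc (fun x : ℝ => 1 - x^2) S := by
    rw [hDdef, ← cfc_mul f f S]
    apply cfc_congr
    intro x hx
    simp only [hf]
    rw [Real.mul_self_sqrt (by linarith [hspec x hx])]
  have hsq : S * S + D * D = 1 := by
    rw [hSS, hDD, ← cfc_add S _ _, ← cfc_one (R := ℝ) S]
    apply cfc_congr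
    intro x _
    simp only [Pi.one_apply]
    ring
  have hcomm : D * S = S * D := by
    have h : cfc (fun x : ℝ => f x * x) S = cfc (fun x : ℝ => x * f x) S :=
      cfc_congr fun x _ => mul_comm _ _
    rw [cfc_mul f _ S, cfc_mul _ f S, cfc_id' ℝ S] at h
    rw [hDdef]
    exact h
  have expand : ∀ c : ℂ, c * c = -1 → (S + c • D) * (S + (-c) • D) = 1 := by
    intro c hc
    have h1 : (c • D) * ((-c) • D) = D * D := by
      rw [smul_mul_assoc, mul_smul_comm, smul_smul]
      have h : c * -c = 1 := by rw [mul_neg, hc, neg_neg]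
      rw [h, one_smul]
    have h2 : S * ((-c) • D) + (c • D) * S = 0 := by
      rw [smul_mul_assoc, hcomm, mul_smul_comm, ← add_smul]
      simp
    calc (S + c • D) * (S + (-c) • D)
        = S * S + S * ((-c) • D) + ((c • D) * S + (c • D) * ((-c) • D)) := by
          rw [add_mul, mul_add, mul_add]
      _ = S * S + D * D + (S * ((-c) • D) + (c • D) * S) := by rw [h1]; abel
      _ = 1 := by rw [h2, add_zero, hsq]
  set U : H →L[ℂ] H := S + Complex.I • D with hU
  have hstarU : star U = S + (-Complex.I) • D := by
    rw [hU, star_add, hS.star_eq, star_smul, hD.star_eq, Complex.star_def, Complex.conj_I,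
      neg_smul, ← neg_smul]
  refine ⟨U, ⟨?_, ?_⟩, ?_⟩
  · rw [hstarU]
    have h := expand (-Complex.I) (by rw [neg_mul_neg, Complex.I_mul_I])
    simpa [neg_neg] using h
  · rw [hstarU]
    exact expand Complex.I Complex.I_mul_I
  · rw [hU, hstarU]
    module


end WithNontrivial

lemma exists_isUnit_sub_smul (F : H →L[ℂ] H) (hF : FiniteRank F) {ε : ℝ} (hε : 0 < ε) :
    ∃ lam : ℂ, lam ≠ 0 ∧ ‖lam‖ ≤ ε ∧ IsUnit (F - lam • (1 : H →L[ℂ] H)) := by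
  haveI : FiniteDimensional ℂ (LinearMap.range (F : H →ₗ[ℂ] H)) := hF
  have hmem : ∀ x : H, F x ∈ LinearMap.range (F : H →ₗ[ℂ] H) := fun x => LinearMap.mem_range_self _ x
  set f : LinearMap.range (F : H →ₗ[ℂ] H) →ₗ[ℂ] LinearMap.range (F : H →ₗ[ℂ] H) :=
    (F : H →ₗ[ℂ] H).restrict (fun x _ => hmem x) with hfdef
  have hfin : (spectrum ℂ f).Finite := Module.End.finite_spectrum f
  obtain ⟨lam, hlam1, hlam2⟩ :
      ∃ lam : ℂ, lam ∈ (fun r : ℝ => (r : ℂ)) '' Set.Ioc (0:ℝ) ε ∧ lam ∉ spectrum ℂ f := by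
    have hinfinite : ((fun r : ℝ => (r : ℂ)) '' Set.Ioc (0:ℝ) ε).Infinite :=
      Set.Infinite.image (Set.injOn_of_injective Complex.ofReal_injective)
        (Set.Ioc_infinite hε)
    exact Set.Infinite.exists_notMem_finite hinfinite hfin
  obtain ⟨r, hr, hrlam⟩ := hlam1
  simp only at hrlam
  have hlam0 : lam ≠ 0 := by
    rw [← hrlam]; exact_mod_cast ne_of_gt hr.1
  have hlamnorm : ‖lam‖ ≤ ε := by
    rw [← hrlam]
    simpa [Complex.norm_real, abs_of_pos hr.1] using hr.2
  have hg : IsUnit (algebraMap ℂ (Module.End ℂ (LinearMap.range (F : H →ₗ[ℂ] H))) lam - f) := by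
    rwa [spectrum.notMem_iff] at hlam2
  obtain ⟨hginj, hgsurj⟩ := (Module.End.isUnit_iff _).mp hg
  set B : H →L[ℂ] H := F - lam • 1 with hB
  have hBapply : ∀ x, B x = F x - lam • x := fun x => rfl
  have hgapply : ∀ w : LinearMap.range (F : H →ₗ[ℂ] H),
      ((algebraMap ℂ (Module.End ℂ (LinearMap.range (F : H →ₗ[ℂ] H))) lam - f) w : H)
        = lam • (w : H) - F (w : H) := by
    intro w
    simp [hfdef, LinearMap.restrict_apply, Module.algebraMap_end_apply]
  have hker : LinearMap.ker (B : H →ₗ[ℂ] H) = ⊥ := by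
    rw [LinearMap.ker_eq_bot']
    intro x hx
    have h1 : F x = lam • x := by
      have := hBapply x; rw [show B x = 0 from hx] at this
      exact sub_eq_zero.mp this.symm
    have hxW : x ∈ LinearMap.range (F : H →ₗ[ℂ] H) := by
      have : x = lam⁻¹ • F x := by rw [h1, smul_smul, inv_mul_cancel₀ hlam0, one_smul]
      rw [this]
      exact Submodule.smul_mem _ _ (hmem x)
    set xw : LinearMap.range (F : H →ₗ[ℂ] H) := ⟨x, hxW⟩ with hxw
    have h2 : (algebraMap ℂ (Module.End ℂ (LinearMap.range (F : H →ₗ[ℂ] H))) lam - f) xw = 0 := by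
      apply Subtype.ext
      rw [hgapply xw]
      simp only [hxw, Submodule.coe_zero]
      rw [← h1]
      exact sub_self _
    have h3 : xw = 0 := by
      apply hginj
      rw [h2, map_zero]
    have : x = 0 := congrArg Subtype.val h3
    exact this
  have hrange : LinearMap.range (B : H →ₗ[ℂ] H) = ⊤ := by
    rw [LinearMap.range_eq_top]
    intro y
    obtain ⟨w, hw⟩ := hgsurj ((-lam⁻¹) • (⟨F y, hmem y⟩ : LinearMap.range (F : H →ₗ[ℂ] H)))
    have hw' : lam • (w : H) - F (w : H) = -(lam⁻¹ • F y) := by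
      have := congrArg (Subtype.val) hw
      rw [hgapply w] at this
      rw [this]
      simp [neg_smul]
    have hkey : F (w : H) - lam • (w : H) = lam⁻¹ • F y := by
      rw [← neg_sub (lam • (w : H)), hw', neg_neg]
    refine ⟨(w : H) - lam⁻¹ • y, ?_⟩
    calc B ((w : H) - lam⁻¹ • y)
        = (F (w : H) - lam • (w : H)) - lam⁻¹ • F y + (lam * lam⁻¹) • y := by
          rw [hBapply, map_sub, map_smul, smul_sub, smul_smul]; abel
      _ = y := by rw [hkey, mul_inv_cancel₀ hlam0, one_smul]; abel
  set e := ContinuousLinearEquiv.ofBijective B hker hrange with he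
  have hcoe' : ((e : H ≃L[ℂ] H) : H →L[ℂ] H) = B :=
    ContinuousLinearEquiv.coe_ofBijective B hker hrange
  have hcoe : ∀ x, e x = B x := fun x => by rw [← hcoe']; rfl
  refine ⟨lam, hlam0, hlamnorm, ?_⟩
  refine isUnit_iff_exists.mpr ⟨(e.symm : H →L[ℂ] H), ?_, ?_⟩
  · ext x
    show B (e.symm x) = x
    rw [← hcoe (e.symm x), e.apply_symm_apply]
  · ext x
    show e.symm (B x) = x
    rw [← hcoe x, e.symm_apply_apply]


section Seminorm

variable {H : Type*} [NormedAddCommGroup H] [InnerProductSpace ℂ H] [CompleteSpace H]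
  [Nontrivial H]
  (N : (H →L[ℂ] H) → ℝ)
  (hsmul : ∀ (c : ℂ) (T : H →L[ℂ] H), FiniteRank T → N (c • T) = ‖c‖ * N T)
  (hadd : ∀ S T : H →L[ℂ] H, FiniteRank S → FiniteRank T → N (S + T) ≤ N S + N T)
  (hunit : ∀ U : H →L[ℂ] H, U ∈ unitary (H →L[ℂ] H) →
      ∀ T : H →L[ℂ] H, FiniteRank T → N (U ∘L T) = N T)

include hsmul in
lemma N_zero : N (0 : H →L[ℂ] H) = 0 := by
  have h := hsmul 0 0 finiteRank_zero
  simpa using h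

include hsmul hadd in
lemma N_nonneg {T : H →L[ℂ] H} (hT : FiniteRank T) : 0 ≤ N T := by
  have h0 : N (T + (-1 : ℂ) • T) = 0 := by
    rw [show T + (-1 : ℂ) • T = 0 by simp, N_zero N hsmul]
  have h1 := hadd T ((-1 : ℂ) • T) hT (finiteRank_smul _ hT)
  rw [h0, hsmul _ _ hT] at h1
  simp at h1
  linarith

include hsmul hadd hunit in
lemma N_selfadjoint_comp {S T : H →L[ℂ] H} (hS : IsSelfAdjoint S) (hT : FiniteRank T) :
    N (S ∘L T) ≤ ‖S‖ * N T := by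
  rcases eq_or_ne S 0 with rfl | hS0
  · rw [ContinuousLinearMap.zero_comp, N_zero N hsmul, norm_zero, zero_mul]
  have hpos : (0:ℝ) < ‖S‖ := norm_pos_iff.mpr hS0
  set S₀ : H →L[ℂ] H := ((‖S‖⁻¹ : ℝ) : ℂ) • S with hS₀
  have hS₀sa : IsSelfAdjoint S₀ := by
    rw [hS₀, IsSelfAdjoint, star_smul, hS.star_eq, Complex.star_def, Complex.conj_ofReal]
  have hS₀n : ‖S₀‖ ≤ 1 := by
    rw [hS₀, norm_smul]
    rw [Complex.norm_real, Real.norm_eq_abs, abs_of_pos (inv_pos.mpr hpos),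
      inv_mul_cancel₀ (ne_of_gt hpos)]
  obtain ⟨U, hU, hdecomp⟩ := selfAdjoint_mean_unitary hS₀sa hS₀n
  have hrec : S = ((‖S‖ : ℝ) : ℂ) • S₀ := by
    rw [hS₀, smul_smul]
    norm_cast
    rw [mul_inv_cancel₀ (ne_of_gt hpos), one_smul]
  have hfr1 : FiniteRank (U ∘L T) := finiteRank_comp U hT
  have hfr2 : FiniteRank (star U ∘L T) := finiteRank_comp _ hT
  have hcomp : S₀ ∘L T = (1/2 : ℂ) • (U ∘L T + star U ∘L T) := by
    rw [hdecomp]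
    rw [ContinuousLinearMap.smul_comp, ContinuousLinearMap.add_comp]
  have h1 : N (S₀ ∘L T) ≤ N T := by
    rw [hcomp, hsmul _ _ (by
      rw [← ContinuousLinearMap.add_comp]
      exact finiteRank_comp _ hT)]
    have h2 := hadd _ _ hfr1 hfr2
    have h3 : N (U ∘L T) = N T := hunit U hU T hT
    have h4 : N (star U ∘L T) = N T := hunit (star U) (Unitary.star_mem hU) T hT
    rw [h3, h4] at h2
    have : ‖(1/2 : ℂ)‖ = 1/2 := by norm_num
    rw [this]
    linarith
  calc N (S ∘L T) = N ((((‖S‖ : ℝ) : ℂ) • S₀) ∘L T) := by rw [← hrec]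
    _ = ‖((‖S‖ : ℝ) : ℂ)‖ * N (S₀ ∘L T) := by
        rw [ContinuousLinearMap.smul_comp, hsmul _ _ (finiteRank_comp _ hT)]
    _ ≤ ‖S‖ * N T := by
        rw [Complex.norm_real, Real.norm_eq_abs, abs_of_pos hpos]
        exact mul_le_mul_of_nonneg_left h1 (le_of_lt hpos)

include hsmul hadd hunit in
lemma N_isUnit_comp {B T : H →L[ℂ] H} (hB : IsUnit B) (hT : FiniteRank T) :
    N (B ∘L T) ≤ ‖B‖ * N T := by
  set S : H →L[ℂ] H := star B * B with hSdef
  have hSpos : (0 : H →L[ℂ] H) ≤ S := star_mul_self_nonneg B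
  set R : H →L[ℂ] H := CFC.sqrt S with hRdef
  have hRpos : (0 : H →L[ℂ] H) ≤ R := CFC.sqrt_nonneg S
  have hRsa : IsSelfAdjoint R := IsSelfAdjoint.of_nonneg hRpos
  have hRsq : R * R = S := CFC.sqrt_mul_sqrt_self S hSpos
  have hSunit : IsUnit S := (hB.star).mul hB
  -- R is a unit
  have hRunit : IsUnit R := by
    obtain ⟨s, hs⟩ := hSunit
    have hcommS : Commute R S := by
      rw [← hRsq]; exact (Commute.refl R).mul_right (Commute.refl R)
    have hcomm : Commute R (↑s⁻¹ : H →L[ℂ] H) := by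
      have : Commute R (↑s : H →L[ℂ] H) := by rwa [hs]
      exact this.units_inv_right
    refine isUnit_iff_exists.mpr ⟨(↑s⁻¹ : H →L[ℂ] H) * R, ?_, ?_⟩
    · rw [← mul_assoc, hcomm.eq, mul_assoc, hRsq, ← hs, Units.inv_mul]
    · rw [mul_assoc, hRsq, ← hs, Units.inv_mul]
  obtain ⟨u, hu⟩ := hRunit
  set W : H →L[ℂ] H := B * ↑u⁻¹ with hWdef
  have hsui : star (↑u⁻¹ : H →L[ℂ] H) = ↑u⁻¹ := by
    have h1 : R * (↑u⁻¹ : H →L[ℂ] H) = 1 := by rw [← hu, Units.mul_inv]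
    have h2 : (↑u⁻¹ : H →L[ℂ] H) * R = 1 := by rw [← hu, Units.inv_mul]
    have h3 : R * star (↑u⁻¹ : H →L[ℂ] H) = 1 := by
      have := congrArg star h2
      rwa [star_mul, hRsa.star_eq, star_one] at this
    calc star (↑u⁻¹ : H →L[ℂ] H) = ((↑u⁻¹ : H →L[ℂ] H) * R) * star (↑u⁻¹ : H →L[ℂ] H) := by
          rw [h2, one_mul]
      _ = (↑u⁻¹ : H →L[ℂ] H) * (R * star (↑u⁻¹ : H →L[ℂ] H)) := by rw [mul_assoc]
      _ = ↑u⁻¹ := by rw [h3, mul_one]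
  have h1 : R * (↑u⁻¹ : H →L[ℂ] H) = 1 := by rw [← hu, Units.mul_inv]
  have h2 : (↑u⁻¹ : H →L[ℂ] H) * R = 1 := by rw [← hu, Units.inv_mul]
  have hRR : R * R = star B * B := hRsq.trans hSdef
  have hWl : star W * W = 1 := by
    calc star W * W = ↑u⁻¹ * star B * (B * ↑u⁻¹) := by rw [hWdef, star_mul, hsui]
      _ = ↑u⁻¹ * (star B * B) * ↑u⁻¹ := by noncomm_ring
      _ = ↑u⁻¹ * (R * R) * ↑u⁻¹ := by rw [hRR]
      _ = (↑u⁻¹ * R) * (R * ↑u⁻¹) := by noncomm_ring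
      _ = 1 := by rw [h2, h1, one_mul]
  have hWunit : IsUnit W := hB.mul u⁻¹.isUnit
  obtain ⟨w, hw⟩ := hWunit
  have hstarW : star W = ↑w⁻¹ := by
    calc star W = star W * (W * ↑w⁻¹) := by rw [← hw, Units.mul_inv, mul_one]
      _ = (star W * W) * ↑w⁻¹ := (mul_assoc (star W) W (↑w⁻¹ : H →L[ℂ] H)).symm
      _ = ↑w⁻¹ := by rw [hWl, one_mul]
  have hWr : W * star W = 1 := by rw [hstarW, ← hw, Units.mul_inv]
  have hWunitary : W ∈ unitary (H →L[ℂ] H) := Unitary.mem_iff.mpr ⟨hWl, hWr⟩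
  have hWR : W * R = B := by rw [hWdef, mul_assoc, h2, mul_one]
  have hfact : B ∘L T = W ∘L (R ∘L T) := by
    rw [← ContinuousLinearMap.comp_assoc]
    rw [show W ∘L R = W * R from rfl, hWR]
  have hnorm : ‖R‖ = ‖B‖ := by
    have e1 : ‖R‖ * ‖R‖ = ‖B‖ * ‖B‖ := by
      calc ‖R‖ * ‖R‖ = ‖star R * R‖ := CStarRing.norm_star_mul_self.symm
        _ = ‖R * R‖ := by rw [hRsa.star_eq]
        _ = ‖star B * B‖ := by rw [hRR]
        _ = ‖B‖ * ‖B‖ := CStarRing.norm_star_mul_self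
    nlinarith [norm_nonneg R, norm_nonneg B]
  calc N (B ∘L T) = N (W ∘L (R ∘L T)) := by rw [hfact]
    _ = N (R ∘L T) := hunit W hWunitary _ (finiteRank_comp R hT)
    _ ≤ ‖R‖ * N T := N_selfadjoint_comp N hsmul hadd hunit hRsa hT
    _ = ‖B‖ * N T := by rw [hnorm]


end Seminorm

end Aux

/-- If `N` is a seminorm on the ideal `J(H)` of finite-rank operators on a separable
infinite-dimensional complex Hilbert space `H` which is left unitarily invariant,
then for every `A ∈ B(H)` and `T ∈ J(H)`, `A T ∈ J(H)` and `N(A T) ≤ ‖A‖ ⬝ N(T)`. -/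
theorem seminorm_comp_le_of_left_unitarily_invariant
    {H : Type*} [NormedAddCommGroup H] [InnerProductSpace ℂ H] [CompleteSpace H]
    [TopologicalSpace.SeparableSpace H] (hinf : ¬ FiniteDimensional ℂ H)
    (N : (H →L[ℂ] H) → ℝ)
    (hsmul : ∀ (c : ℂ) (T : H →L[ℂ] H), FiniteRank T → N (c • T) = ‖c‖ * N T)
    (hadd : ∀ S T : H →L[ℂ] H, FiniteRank S → FiniteRank T → N (S + T) ≤ N S + N T)
    (hunit : ∀ U : H →L[ℂ] H, U ∈ unitary (H →L[ℂ] H) →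
      ∀ T : H →L[ℂ] H, FiniteRank T → N (U ∘L T) = N T)
    (A T : H →L[ℂ] H) (hT : FiniteRank T) :
    FiniteRank (A ∘L T) ∧ N (A ∘L T) ≤ ‖A‖ * N T := by
  haveI hNtriv : Nontrivial H := by
    by_contra h
    rw [not_nontrivial_iff_subsingleton] at h
    exact hinf inferInstance
  refine ⟨finiteRank_comp A hT, ?_⟩
  haveI hK : FiniteDimensional ℂ (LinearMap.range (T : H →ₗ[ℂ] H)) := hT
  haveI : CompleteSpace (LinearMap.range (T : H →ₗ[ℂ] H)) := FiniteDimensional.complete ℂ _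
  set K := LinearMap.range (T : H →ₗ[ℂ] H) with hKdef
  set P : H →L[ℂ] H := K.subtypeL ∘L K.orthogonalProjectionOnto with hPdef
  have hPT : P ∘L T = T := by
    ext x
    show (K.orthogonalProjectionOnto (T x) : H) = T x
    exact congrArg Subtype.val
      (Submodule.orthogonalProjectionOnto_mem_subspace_eq_self (⟨T x, LinearMap.mem_range_self _ x⟩ : K))
  have hPrank : FiniteRank P := by
    unfold FiniteRank
    refine Submodule.finiteDimensional_of_le (S₂ := K) ?_
    rintro x ⟨y, rfl⟩
    exact (K.orthogonalProjectionOnto y).2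
  have hPnorm : ‖P‖ ≤ 1 := by
    rw [hPdef]
    refine le_trans (ContinuousLinearMap.opNorm_comp_le _ _) ?_
    have h1 := Submodule.norm_subtypeL_le K
    have h2 := Submodule.orthogonalProjectionOnto_norm_le K
    nlinarith [norm_nonneg (K.orthogonalProjectionOnto), norm_nonneg K.subtypeL]
  set F := A ∘L P with hFdef
  have hFrank : FiniteRank F := finiteRank_comp A hPrank
  have hFT : F ∘L T = A ∘L T := by rw [hFdef, ContinuousLinearMap.comp_assoc, hPT]
  have hFnorm : ‖F‖ ≤ ‖A‖ := by
    rw [hFdef]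
    refine le_trans (ContinuousLinearMap.opNorm_comp_le _ _) ?_
    nlinarith [norm_nonneg A]
  have hNT : 0 ≤ N T := N_nonneg N hsmul hadd hT
  have main : ∀ ε : ℝ, 0 < ε → N (A ∘L T) ≤ ‖A‖ * N T + ε := by
    intro ε hε
    have hδ : 0 < ε / (2 * (N T + 1)) := by positivity
    obtain ⟨lam, hlam0, hlamle, hBunit⟩ := exists_isUnit_sub_smul F hFrank hδ
    set B := F - lam • (1 : H →L[ℂ] H) with hBdef
    have hsplit : A ∘L T = B ∘L T + lam • T := by
      rw [← hFT, show F = B + lam • (1 : H →L[ℂ] H) by rw [hBdef]; abel,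
        ContinuousLinearMap.add_comp, ContinuousLinearMap.smul_comp,
        show (1 : H →L[ℂ] H) ∘L T = T from one_mul T]
    have hBnorm : ‖B‖ ≤ ‖A‖ + ε / (2 * (N T + 1)) := by
      rw [hBdef]
      refine le_trans (norm_sub_le _ _) ?_
      rw [norm_smul, norm_one, mul_one]
      linarith
    have step1 : N (A ∘L T) ≤ N (B ∘L T) + N (lam • T) := by
      rw [hsplit]
      exact hadd _ _ (finiteRank_comp B hT) (finiteRank_smul lam hT)
    have step2 : N (B ∘L T) ≤ ‖B‖ * N T := N_isUnit_comp N hsmul hadd hunit hBunit hT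
    have step3 : N (lam • T) = ‖lam‖ * N T := hsmul lam T hT
    have hfrac : ε / (2 * (N T + 1)) * N T ≤ ε / 2 := by
      rw [div_mul_eq_mul_div, div_le_div_iff₀ (by positivity) (by norm_num)]
      nlinarith
    have : N (A ∘L T) ≤ (‖A‖ + ε / (2 * (N T + 1))) * N T + ε / (2 * (N T + 1)) * N T := by
      have h4 : N (B ∘L T) ≤ (‖A‖ + ε / (2 * (N T + 1))) * N T :=
        le_trans step2 (mul_le_mul_of_nonneg_right hBnorm hNT)
      have h5 : N (lam • T) ≤ ε / (2 * (N T + 1)) * N T := by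
        rw [step3]; exact mul_le_mul_of_nonneg_right hlamle hNT
      linarith
    nlinarith
  by_contra hlt
  push_neg at hlt
  have := main ((N (A ∘L T) - ‖A‖ * N T) / 2) (by linarith)
  linarith
end

section
/- Let m denote Lebesgue measure on [0,∞) and let J denote the space of bounded measurable functions f : [0,∞) → ℂ vanishing outside a set of finite measure. For f ∈ J: (i) for every t ∈ (0,1], sup{ |∫₀^∞ f g dm| : g ∈ J with (1/t)∫₀ᵗ g*(s) ds ≤ 1 } = max{ t · esssup|f|, ∫₀^∞ |f| dm }; (ii) for every t ∈ (1,∞), sup{ |∫₀^∞ f g dm| : g ∈ J with ∫₀ᵗ g*(s) ds ≤ 1 } = max{ esssup|f|, (1/t)∫₀^∞ |f| dm }. -/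
open MeasureTheory

/-- The nonincreasing rearrangement of `|f|` for a measurable function `f` on `[0,∞)`:
`f*(x) = sup{ y ∈ [0,∞) : m({t : |f(t)| > y}) > x }`, where `m` is Lebesgue measure
on `[0,∞)`. -/
noncomputable def decRearr (f : ℝ → ℂ) (x : ℝ) : ℝ :=
  sSup {y : ℝ | 0 ≤ y ∧
    ENNReal.ofReal x < (volume.restrict (Set.Ici (0:ℝ))) {t : ℝ | y < ‖f t‖}}

/-- Membership in `J`: the bounded measurable functions on `[0,∞)` vanishing outside a set
of finite measure. -/
def MemJ (f : ℝ → ℂ) : Prop :=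
  Measurable f ∧ (∃ C : ℝ, ∀ t, ‖f t‖ ≤ C) ∧
    (volume.restrict (Set.Ici (0:ℝ))) (Function.support f) < ⊤

open MeasureTheory Set
open scoped ENNReal

namespace KFaux

noncomputable abbrev mu : Measure ℝ := volume.restrict (Set.Ici (0:ℝ))

/-- distribution function -/
noncomputable def dd (g : ℝ → ℂ) (y : ℝ) : ℝ≥0∞ := mu {t : ℝ | y < ‖g t‖}

lemma dd_antitone (g : ℝ → ℂ) : Antitone (dd g) := by
  intro a b hab
  exact measure_mono (fun t ht => lt_of_le_of_lt hab ht)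

lemma decRearr_eq (g : ℝ → ℂ) (x : ℝ) :
    decRearr g x = sSup {y : ℝ | 0 ≤ y ∧ ENNReal.ofReal x < dd g y} := rfl

lemma decRearr_nonneg (g : ℝ → ℂ) (x : ℝ) : 0 ≤ decRearr g x :=
  Real.sSup_nonneg (fun y hy => hy.1)

lemma decRearr_le_of_norm_le {g : ℝ → ℂ} {c : ℝ} (hc : 0 ≤ c)
    (h : ∀ u, ‖g u‖ ≤ c) (x : ℝ) : decRearr g x ≤ c := by
  apply Real.sSup_le _ hc
  intro y hy
  by_contra hyc
  push_neg at hyc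
  have : {t : ℝ | y < ‖g t‖} = ∅ := by
    ext t; simp only [Set.mem_setOf_eq, Set.mem_empty_iff_false, iff_false, not_lt]
    exact le_trans (h t) hyc.le
  have h2 := hy.2
  rw [this] at h2
  simp at h2

lemma decRearr_antitone {g : ℝ → ℂ} {C : ℝ} (h : ∀ u, ‖g u‖ ≤ C) :
    Antitone (decRearr g) := by
  intro a b hab
  apply Real.sSup_le _ (decRearr_nonneg g a)
  intro y hy
  have hbdd : BddAbove {y : ℝ | 0 ≤ y ∧ ENNReal.ofReal a < dd g y} := by
    refine ⟨max C 0, fun z hz => ?_⟩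
    by_contra hzc
    push_neg at hzc
    have : {t : ℝ | z < ‖g t‖} = ∅ := by
      ext t; simp only [Set.mem_setOf_eq, Set.mem_empty_iff_false, iff_false, not_lt]
      exact le_trans (h t) (le_trans (le_max_left _ _) hzc.le)
    have h2 := hz.2
    rw [show dd g z = 0 by rw [dd, this]; simp] at h2
    simp at h2
  exact le_csSup hbdd ⟨hy.1, lt_of_le_of_lt (ENNReal.ofReal_le_ofReal hab) hy.2⟩

lemma lt_decRearr_iff {g : ℝ → ℂ} {C : ℝ} (h : ∀ u, ‖g u‖ ≤ C)
    {x y : ℝ} (hy : 0 ≤ y) :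
    y < decRearr g x ↔ ENNReal.ofReal x < dd g y := by
  have hbdd : BddAbove {z : ℝ | 0 ≤ z ∧ ENNReal.ofReal x < dd g z} := by
    refine ⟨max C 0, fun z hz => ?_⟩
    by_contra hzc
    push_neg at hzc
    have : {t : ℝ | z < ‖g t‖} = ∅ := by
      ext t; simp only [Set.mem_setOf_eq, Set.mem_empty_iff_false, iff_false, not_lt]
      exact le_trans (h t) (le_trans (le_max_left _ _) hzc.le)
    have h2 := hz.2
    rw [show dd g z = 0 by rw [dd, this]; simp] at h2
    simp at h2
  constructor
  · intro hlt
    rw [decRearr_eq] at hlt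
    obtain ⟨z, hz, hyz⟩ := exists_lt_of_lt_csSup
      (by
        by_contra hempty
        rw [Set.not_nonempty_iff_eq_empty] at hempty
        rw [hempty, Real.sSup_empty] at hlt
        exact absurd hlt (not_lt.mpr hy)) hlt
    exact lt_of_lt_of_le hz.2 (dd_antitone g hyz.le)
  · intro hlt
    -- right continuity
    have hunion : {t : ℝ | y < ‖g t‖} = ⋃ n : ℕ, {t : ℝ | y + (1 : ℝ)/(n+1) < ‖g t‖} := by
      ext t
      simp only [Set.mem_setOf_eq, Set.mem_iUnion]
      constructor
      · intro ht
        obtain ⟨n, hn⟩ := exists_nat_one_div_lt (sub_pos.mpr ht)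
        exact ⟨n, by linarith⟩
      · rintro ⟨n, hn⟩
        have : (0:ℝ) < 1/(n+1) := by positivity
        linarith
    have hmono : Monotone (fun n : ℕ => {t : ℝ | y + (1 : ℝ)/(n+1) < ‖g t‖}) := by
      intro m n hmn t ht
      simp only [Set.mem_setOf_eq] at *
      have hc : (m:ℝ) + 1 ≤ (n:ℝ) + 1 := by exact_mod_cast Nat.succ_le_succ hmn
      have : (1:ℝ)/(n+1) ≤ 1/(m+1) := by gcongr
      linarith
    have hsup : dd g y = ⨆ n : ℕ, dd g (y + 1/(n+1)) := by
      rw [dd, hunion]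
      exact (Monotone.directed_le hmono).measure_iUnion
    rw [hsup] at hlt
    obtain ⟨n, hn⟩ := lt_iSup_iff.mp hlt
    have hmem : y + 1/(n+1) ∈ {z : ℝ | 0 ≤ z ∧ ENNReal.ofReal x < dd g z} :=
      ⟨by positivity, hn⟩
    rw [decRearr_eq]
    have hpos : (0:ℝ) < 1/(n+1) := by positivity
    calc y < y + 1/(n+1) := by linarith
    _ ≤ _ := le_csSup hbdd hmem

lemma decRearr_eq_zero {g : ℝ → ℂ} {x : ℝ}
    (h : ∀ y, 0 ≤ y → dd g y ≤ ENNReal.ofReal x) : decRearr g x = 0 := by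
  have : {y : ℝ | 0 ≤ y ∧ ENNReal.ofReal x < dd g y} = ∅ := by
    ext y
    simp only [Set.mem_setOf_eq, Set.mem_empty_iff_false, iff_false, not_and, not_lt]
    exact h y
  rw [decRearr_eq, this, Real.sSup_empty]



lemma mu_ne_zero : mu ≠ 0 := by
  intro h
  have : mu Set.univ = 0 := by rw [h]; rfl
  rw [Measure.restrict_apply_univ] at this
  simp [Real.volume_Ici] at this

instance : Filter.NeBot (ae mu) := ae_neBot.mpr mu_ne_zero

lemma memJ_support_measurable {f : ℝ → ℂ} (hf : MemJ f) :
    MeasurableSet (Function.support f) := by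
  rw [Function.support_eq_preimage]
  exact hf.1 (measurableSet_singleton 0).compl

lemma memJ_integrable {f : ℝ → ℂ} (hf : MemJ f) : Integrable f mu := by
  obtain ⟨hm, ⟨C, hC⟩, hsupp⟩ := hf
  refine ⟨hm.aestronglyMeasurable, ?_⟩
  rw [HasFiniteIntegral]
  calc ∫⁻ u, ‖f u‖₊ ∂mu
      ≤ ∫⁻ u, (Function.support f).indicator (fun _ => ENNReal.ofReal C) u ∂mu := by
        apply lintegral_mono
        intro u
        by_cases hu : f u = 0
        · simp [hu]
        · rw [Set.indicator_of_mem (by exact hu)]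
          beta_reduce
          rw [← ENNReal.ofReal_coe_nnreal, coe_nnnorm]
          exact ENNReal.ofReal_le_ofReal (hC u)
    _ = ENNReal.ofReal C * mu (Function.support f) := by
        rw [lintegral_indicator (memJ_support_measurable ⟨hm, ⟨C, hC⟩, hsupp⟩)]
        simp [mul_comm]
    _ < ⊤ := ENNReal.mul_lt_top ENNReal.ofReal_lt_top hsupp

lemma memJ_integrable_mul {f g : ℝ → ℂ} (hf : MemJ f) (hg : MemJ g) :
    Integrable (fun u => f u * g u) mu :=
  Integrable.bdd_mul (memJ_integrable hg) hf.1.aestronglyMeasurable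
    (Filter.Eventually.of_forall hf.2.1.choose_spec)

lemma essSup_bddUnder {f : ℝ → ℂ} (hf : MemJ f) :
    Filter.IsBoundedUnder (· ≤ ·) (ae mu) (fun u => ‖f u‖) := by
  obtain ⟨C, hC⟩ := hf.2.1
  refine ⟨C, ?_⟩
  rw [Filter.eventually_map]
  exact Filter.Eventually.of_forall (fun u => hC u)

lemma ae_norm_le_essSup {f : ℝ → ℂ} (hf : MemJ f) :
    ∀ᵐ u ∂mu, ‖f u‖ ≤ essSup (fun u => ‖f u‖) mu := by
  set M := essSup (fun u => ‖f u‖) mu with hM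
  have key : ∀ n : ℕ, mu {u | M + 1/(n+1) < ‖f u‖} = 0 := by
    intro n
    have hlt : essSup (fun u => ‖f u‖) mu < M + 1/(n+1) := by
      have : (0:ℝ) < 1/(n+1) := by positivity
      linarith
    have := ae_lt_of_essSup_lt hlt (essSup_bddUnder hf)
    rw [ae_iff] at this
    refine measure_mono_null ?_ this
    intro u hu
    simp only [Set.mem_setOf_eq, not_lt] at *
    linarith
  have : mu {u | M < ‖f u‖} = 0 := by
    have hunion : {u | M < ‖f u‖} = ⋃ n : ℕ, {u | M + (1:ℝ)/(n+1) < ‖f u‖} := by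
      ext u
      simp only [Set.mem_setOf_eq, Set.mem_iUnion]
      constructor
      · intro hu
        obtain ⟨n, hn⟩ := exists_nat_one_div_lt (sub_pos.mpr hu)
        exact ⟨n, by linarith⟩
      · rintro ⟨n, hn⟩
        have : (0:ℝ) < 1/(n+1) := by positivity
        linarith
    rw [hunion]
    exact measure_iUnion_null key
  rw [ae_iff]
  refine measure_mono_null ?_ this
  intro u hu
  simpa using hu

lemma meas_pos_of_lt_essSup {f : ℝ → ℂ} (hf : MemJ f) {β : ℝ}
    (hβ : β < essSup (fun u => ‖f u‖) mu) : mu {u | β < ‖f u‖} ≠ 0 := by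
  intro h0
  have hae : ∀ᵐ u ∂mu, ‖f u‖ ≤ β := by
    rw [ae_iff]
    refine measure_mono_null ?_ h0
    intro u hu
    simpa using hu
  have : essSup (fun u => ‖f u‖) mu ≤ β :=
    Filter.limsup_le_of_le
      (Filter.isCoboundedUnder_le_of_eventually_le _
        (Filter.Eventually.of_forall (fun u => norm_nonneg _))) hae
  linarith


lemma dd_lt_top {g : ℝ → ℂ} (hg : MemJ g) {y : ℝ} (hy : 0 < y) : dd g y < ⊤ := by
  refine lt_of_le_of_lt (measure_mono ?_) hg.2.2
  intro u hu
  simp only [Set.mem_setOf_eq] at hu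
  rw [Function.mem_support]
  intro h0
  rw [h0, norm_zero] at hu
  linarith

lemma dd_lt_top' {g : ℝ → ℂ} (hg : MemJ g) {y : ℝ} (hy : 0 < y) : dd g y ≠ ⊤ :=
  (dd_lt_top hg hy).ne

lemma kyfan_constraint {g : ℝ → ℂ} (hg : MemJ g) {t κ : ℝ} (ht : 0 < t)
    (h : (∫ s in (0:ℝ)..t, decRearr g s) ≤ κ) :
    ∫⁻ y in Set.Ioi (0:ℝ), min (ENNReal.ofReal t) (dd g y) ≤ ENNReal.ofReal κ := by
  obtain ⟨C, hC⟩ := hg.2.1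
  have hanti := decRearr_antitone hC
  have hmeas : Measurable (decRearr g) := hanti.measurable
  have hnn : ∀ s, 0 ≤ decRearr g s := decRearr_nonneg g
  have hbd : ∀ s, decRearr g s ≤ max C 0 :=
    decRearr_le_of_norm_le (le_max_right C 0) (fun u => le_trans (hC u) (le_max_left C 0))
  have hint : IntegrableOn (decRearr g) (Set.Ioc 0 t) volume := by
    have hconst : IntegrableOn (fun _ : ℝ => max C 0) (Set.Ioc 0 t) volume :=
      integrableOn_const measure_Ioc_lt_top.ne
    refine Integrable.mono' hconst hmeas.aestronglyMeasurable ?_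
    refine Filter.Eventually.of_forall (fun s => ?_)
    rw [Real.norm_eq_abs, abs_of_nonneg (hnn s)]
    exact hbd s
  rw [intervalIntegral.integral_of_le ht.le] at h
  have hofReal : ∫⁻ s in Set.Ioc (0:ℝ) t, ENNReal.ofReal (decRearr g s) ≤ ENNReal.ofReal κ := by
    rw [← ofReal_integral_eq_lintegral_ofReal hint (Filter.Eventually.of_forall hnn)]
    exact ENNReal.ofReal_le_ofReal h
  have hlc := lintegral_eq_lintegral_meas_lt (volume.restrict (Set.Ioc (0:ℝ) t))
    (Filter.Eventually.of_forall hnn) hmeas.aemeasurable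
  rw [hlc] at hofReal
  refine le_trans (le_of_eq ?_) hofReal
  refine setLIntegral_congr_fun measurableSet_Ioi ?_
  intro y hy
  beta_reduce
  have hDset : MeasurableSet {s : ℝ | y < decRearr g s} := hmeas measurableSet_Ioi
  rw [Measure.restrict_apply hDset]
  have hD := dd_lt_top' hg hy
  set d' := (dd g y).toReal with hd'
  have hd0 : 0 ≤ d' := ENNReal.toReal_nonneg
  have hDq : ENNReal.ofReal d' = dd g y := ENNReal.ofReal_toReal hD
  have hiff : ∀ s : ℝ, 0 < s → (y < decRearr g s ↔ s < d') := by
    intro s hs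
    rw [lt_decRearr_iff hC hy.le]
    rw [← hDq]
    exact ENNReal.ofReal_lt_ofReal_iff_of_nonneg hs.le
  rcases le_total d' t with hcase | hcase
  · have hset : {s : ℝ | y < decRearr g s} ∩ Set.Ioc 0 t = Set.Ioo 0 d' := by
      ext s
      simp only [Set.mem_inter_iff, Set.mem_setOf_eq, Set.mem_Ioc, Set.mem_Ioo]
      constructor
      · rintro ⟨h1, h2, h3⟩
        exact ⟨h2, (hiff s h2).mp h1⟩
      · rintro ⟨h1, h2⟩
        exact ⟨(hiff s h1).mpr h2, h1, le_trans h2.le hcase⟩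
    rw [hset, Real.volume_Ioo, sub_zero, hDq]
    rw [min_eq_right]
    rw [← hDq]
    exact ENNReal.ofReal_le_ofReal hcase
  · have hub : volume ({s : ℝ | y < decRearr g s} ∩ Set.Ioc 0 t) ≤ ENNReal.ofReal t := by
      refine le_trans (measure_mono Set.inter_subset_right) ?_
      rw [Real.volume_Ioc, sub_zero]
    have hlb : ENNReal.ofReal t ≤ volume ({s : ℝ | y < decRearr g s} ∩ Set.Ioc 0 t) := by
      have hsub : Set.Ioo (0:ℝ) t ⊆ {s : ℝ | y < decRearr g s} ∩ Set.Ioc 0 t := by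
        rintro s ⟨h1, h2⟩
        exact ⟨(hiff s h1).mpr (lt_of_lt_of_le h2 hcase), h1, h2.le⟩
      calc ENNReal.ofReal t = volume (Set.Ioo (0:ℝ) t) := by rw [Real.volume_Ioo, sub_zero]
      _ ≤ _ := measure_mono hsub
    rw [le_antisymm hub hlb]
    rw [min_eq_left]
    rw [← hDq]
    exact ENNReal.ofReal_le_ofReal hcase
  
lemma main_upper {f g : ℝ → ℂ} (hf : MemJ f) (hg : MemJ g) {t κ c : ℝ}
    (ht : 0 < t) (hκ : 0 < κ) (hc : 0 ≤ c)
    (hky : ∫⁻ y in Set.Ioi (0:ℝ), min (ENNReal.ofReal t) (dd g y) ≤ ENNReal.ofReal κ)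
    (h1 : κ * essSup (fun u => ‖f u‖) mu ≤ c)
    (h2 : κ * (∫ u in Set.Ici (0:ℝ), ‖f u‖) ≤ c * t) :
    ‖∫ u in Set.Ici (0:ℝ), f u * g u‖ ≤ c := by
  set M := essSup (fun u => ‖f u‖) mu with hM
  set I := ∫ u in Set.Ici (0:ℝ), ‖f u‖ with hI
  have hIeq : ENNReal.ofReal I = ∫⁻ u, ENNReal.ofReal ‖f u‖ ∂mu :=
    ofReal_integral_eq_lintegral_ofReal (memJ_integrable hf).norm
      (Filter.Eventually.of_forall (fun u => norm_nonneg _))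
  set ν := mu.withDensity (fun u => ENNReal.ofReal ‖f u‖) with hν
  have hgm : Measurable (fun u => ‖g u‖) := hg.1.norm
  have hfm : Measurable (fun u => ENNReal.ofReal ‖f u‖) := hf.1.norm.ennreal_ofReal
  set A := ∫⁻ u, ENNReal.ofReal ‖f u‖ * ENNReal.ofReal ‖g u‖ ∂mu with hA
  have hA2 : A = ∫⁻ y in Set.Ioi (0:ℝ), ν {u : ℝ | y < ‖g u‖} := by
    have hwd := lintegral_withDensity_eq_lintegral_mul mu hfm hg.1.norm.ennreal_ofReal
    simp only [Pi.mul_apply] at hwd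
    rw [hA, ← hwd]
    exact lintegral_eq_lintegral_meas_lt ν
      (Filter.Eventually.of_forall (fun u => norm_nonneg _)) hgm.aemeasurable
  have hsetm : ∀ y : ℝ, MeasurableSet {u : ℝ | y < ‖g u‖} := fun y => hgm measurableSet_Ioi
  have hν_le_M : ∀ y : ℝ, ν {u : ℝ | y < ‖g u‖} ≤ ENNReal.ofReal M * dd g y := by
    intro y
    rw [hν, withDensity_apply _ (hsetm y)]
    calc ∫⁻ u in {u : ℝ | y < ‖g u‖}, ENNReal.ofReal ‖f u‖ ∂mu
        ≤ ∫⁻ _ in {u : ℝ | y < ‖g u‖}, ENNReal.ofReal M ∂mu := by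
          refine lintegral_mono_ae ?_
          filter_upwards [ae_restrict_of_ae (ae_norm_le_essSup hf)] with u hu
          exact ENNReal.ofReal_le_ofReal hu
      _ = ENNReal.ofReal M * dd g y := by rw [setLIntegral_const, dd]
  have hν_le_I : ∀ y : ℝ, ν {u : ℝ | y < ‖g u‖} ≤ ENNReal.ofReal I := by
    intro y
    rw [hν, withDensity_apply _ (hsetm y), hIeq]
    exact setLIntegral_le_lintegral _ _
  have hpt : ∀ y : ℝ, ENNReal.ofReal κ * ν {u : ℝ | y < ‖g u‖} ≤
      ENNReal.ofReal c * min (ENNReal.ofReal t) (dd g y) := by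
    intro y
    rcases le_total (ENNReal.ofReal t) (dd g y) with hmin | hmin
    · rw [min_eq_left hmin]
      calc ENNReal.ofReal κ * ν {u : ℝ | y < ‖g u‖}
          ≤ ENNReal.ofReal κ * ENNReal.ofReal I := mul_le_mul_right (hν_le_I y) _
        _ = ENNReal.ofReal (κ * I) := (ENNReal.ofReal_mul hκ.le).symm
        _ ≤ ENNReal.ofReal (c * t) := ENNReal.ofReal_le_ofReal h2
        _ = ENNReal.ofReal c * ENNReal.ofReal t := ENNReal.ofReal_mul hc
    · rw [min_eq_right hmin]
      calc ENNReal.ofReal κ * ν {u : ℝ | y < ‖g u‖}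
          ≤ ENNReal.ofReal κ * (ENNReal.ofReal M * dd g y) := mul_le_mul_right (hν_le_M y) _
        _ = ENNReal.ofReal (κ * M) * dd g y := by rw [ENNReal.ofReal_mul hκ.le, mul_assoc]
        _ ≤ ENNReal.ofReal c * dd g y := mul_le_mul_left (ENNReal.ofReal_le_ofReal h1) _
  have hAc : A ≤ ENNReal.ofReal c := by
    have hchain : ENNReal.ofReal κ * A ≤ ENNReal.ofReal κ * ENNReal.ofReal c := by
      calc ENNReal.ofReal κ * A
          = ∫⁻ y in Set.Ioi (0:ℝ), ENNReal.ofReal κ * ν {u : ℝ | y < ‖g u‖} := by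
            rw [hA2, lintegral_const_mul' _ _ ENNReal.ofReal_ne_top]
        _ ≤ ∫⁻ y in Set.Ioi (0:ℝ),
              ENNReal.ofReal c * min (ENNReal.ofReal t) (dd g y) :=
            lintegral_mono (fun y => hpt y)
        _ = ENNReal.ofReal c * ∫⁻ y in Set.Ioi (0:ℝ),
              min (ENNReal.ofReal t) (dd g y) :=
            lintegral_const_mul' _ _ ENNReal.ofReal_ne_top
        _ ≤ ENNReal.ofReal c * ENNReal.ofReal κ := mul_le_mul_right hky _
        _ = ENNReal.ofReal κ * ENNReal.ofReal c := mul_comm _ _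
    exact (ENNReal.mul_le_mul_iff_right (by simp [hκ]) ENNReal.ofReal_ne_top).mp hchain
  have hnorm : ‖∫ u in Set.Ici (0:ℝ), f u * g u‖ ≤ ∫ u in Set.Ici (0:ℝ), ‖f u * g u‖ :=
    norm_integral_le_integral_norm _
  refine le_trans hnorm ?_
  have hofeq : ENNReal.ofReal (∫ u in Set.Ici (0:ℝ), ‖f u * g u‖) = A := by
    rw [ofReal_integral_eq_lintegral_ofReal (memJ_integrable_mul hf hg).norm
      (Filter.Eventually.of_forall (fun u => norm_nonneg _))]
    rw [hA]
    congr 1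
    ext u
    rw [norm_mul, ENNReal.ofReal_mul (norm_nonneg _)]
  rw [← ENNReal.ofReal_le_ofReal_iff hc, hofeq]
  exact hAc

noncomputable def ph (z : ℂ) : ℂ := if z = 0 then 0 else (starRingEnd ℂ) z / (‖z‖ : ℂ)

lemma ph_measurable : Measurable ph := by
  refine Measurable.ite ?_ measurable_const
    (Complex.continuous_conj.measurable.div
      (Complex.continuous_ofReal.measurable.comp measurable_norm))
  rw [Set.setOf_eq_eq_singleton]
  exact measurableSet_singleton 0

lemma norm_ph_le (z : ℂ) : ‖ph z‖ ≤ 1 := by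
  rw [ph]
  split_ifs with h
  · simp
  · have hzn : ‖z‖ ≠ 0 := norm_ne_zero_iff.mpr h
    rw [norm_div, RCLike.norm_conj, Complex.norm_real, Real.norm_eq_abs,
      abs_of_nonneg (norm_nonneg z), div_self hzn]

lemma mul_ph (z : ℂ) : z * ph z = (‖z‖ : ℂ) := by
  rw [ph]
  split_ifs with h
  · simp [h]
  · have hz : (‖z‖ : ℂ) ≠ 0 := by
      simp only [ne_eq, Complex.ofReal_eq_zero, norm_eq_zero]
      exact h
    have hns : ((Complex.normSq z : ℝ) : ℂ) = (‖z‖:ℂ) * (‖z‖:ℂ) := by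
      norm_cast
      rw [Complex.normSq_eq_norm_sq, sq]
    rw [mul_div_assoc', Complex.mul_conj, hns, mul_div_assoc, div_self hz, mul_one]

lemma decRearr_intervalIntegrable {g : ℝ → ℂ} {C : ℝ} (hC : ∀ u, ‖g u‖ ≤ C)
    (a b : ℝ) : IntervalIntegrable (decRearr g) volume a b :=
  ((decRearr_antitone hC).antitoneOn _).intervalIntegrable

lemma construct {f : ℝ → ℂ} (hf : MemJ f) {B : Set ℝ} (hB : MeasurableSet B)
    (hBsupp : B ⊆ Function.support f) (hBfin : mu B < ⊤) {c : ℝ} (hc : 0 ≤ c) :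
    ∃ g : ℝ → ℂ, MemJ g ∧
      (∀ t : ℝ, 0 < t → (∫ s in (0:ℝ)..t, decRearr g s) ≤ c * min t (mu B).toReal) ∧
      ‖∫ u in Set.Ici (0:ℝ), f u * g u‖ = c * ∫ u in B, ‖f u‖ ∂mu := by
  classical
  set g : ℝ → ℂ := fun u => (c : ℂ) * B.indicator (fun u => ph (f u)) u with hgdef
  have hgnorm : ∀ u, ‖g u‖ ≤ c := by
    intro u
    rw [hgdef]
    simp only [norm_mul, Complex.norm_real, Real.norm_eq_abs, abs_of_nonneg hc]
    have : ‖B.indicator (fun u => ph (f u)) u‖ ≤ 1 := by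
      by_cases hu : u ∈ B
      · rw [Set.indicator_of_mem hu]; exact norm_ph_le _
      · rw [Set.indicator_of_notMem hu]; simp
    calc c * ‖B.indicator (fun u => ph (f u)) u‖ ≤ c * 1 := by
          exact mul_le_mul_of_nonneg_left this hc
      _ = c := mul_one c
  have hgsupp : Function.support g ⊆ B := by
    intro u hu
    rw [Function.mem_support] at hu
    by_contra hB'
    apply hu
    simp [hgdef, Set.indicator_of_notMem hB']
  have hgmem : MemJ g := by
    refine ⟨?_, ⟨c, hgnorm⟩, lt_of_le_of_lt (measure_mono hgsupp) hBfin⟩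
    exact measurable_const.mul ((ph_measurable.comp hf.1).indicator hB)
  have hb0 : (0:ℝ) ≤ (mu B).toReal := ENNReal.toReal_nonneg
  have hdec0 : ∀ x : ℝ, (mu B).toReal ≤ x → decRearr g x = 0 := by
    intro x hx
    apply decRearr_eq_zero
    intro y hy
    calc dd g y ≤ mu B := by
          refine measure_mono ?_
          intro u hu
          simp only [Set.mem_setOf_eq] at hu
          apply hgsupp
          rw [Function.mem_support]
          intro h0
          rw [h0, norm_zero] at hu
          linarith
      _ = ENNReal.ofReal (mu B).toReal := (ENNReal.ofReal_toReal hBfin.ne).symm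
      _ ≤ ENNReal.ofReal x := ENNReal.ofReal_le_ofReal hx
  refine ⟨g, hgmem, ?_, ?_⟩
  · intro t ht
    set b' := (mu B).toReal with hb'
    rcases le_total b' t with hcase | hcase
    · have hsplit : (∫ s in (0:ℝ)..b', decRearr g s) + (∫ s in b'..t, decRearr g s)
          = ∫ s in (0:ℝ)..t, decRearr g s :=
        intervalIntegral.integral_add_adjacent_intervals
          (decRearr_intervalIntegrable hgnorm 0 b') (decRearr_intervalIntegrable hgnorm b' t)
      have h2 : (∫ s in b'..t, decRearr g s) = 0 := by
        rw [intervalIntegral.integral_congr (g := fun _ => (0:ℝ)) ?_]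
        · simp
        · intro s hs
          rw [Set.uIcc_of_le hcase] at hs
          exact hdec0 s hs.1
      have h1 : (∫ s in (0:ℝ)..b', decRearr g s) ≤ c * b' := by
        calc (∫ s in (0:ℝ)..b', decRearr g s) ≤ ∫ s in (0:ℝ)..b', c := by
              refine intervalIntegral.integral_mono_on hb0
                (decRearr_intervalIntegrable hgnorm 0 b') intervalIntegrable_const ?_
              intro s _
              exact decRearr_le_of_norm_le hc hgnorm s
          _ = c * b' := by rw [intervalIntegral.integral_const, smul_eq_mul]; ring
      rw [← hsplit, h2, add_zero]
      rw [min_eq_right hcase]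
      exact h1
    · rw [min_eq_left hcase]
      calc (∫ s in (0:ℝ)..t, decRearr g s) ≤ ∫ s in (0:ℝ)..t, c := by
            refine intervalIntegral.integral_mono_on ht.le
              (decRearr_intervalIntegrable hgnorm 0 t) intervalIntegrable_const ?_
            intro s _
            exact decRearr_le_of_norm_le hc hgnorm s
        _ = c * t := by rw [intervalIntegral.integral_const, smul_eq_mul]; ring
  · have hfg : ∀ u, f u * g u = (c : ℂ) * B.indicator (fun u => ((‖f u‖ : ℝ) : ℂ)) u := by
      intro u
      rw [hgdef]
      by_cases hu : u ∈ B
      · simp only [hgdef, Set.indicator_of_mem hu]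
        rw [show f u * ((c:ℂ) * ph (f u)) = (c:ℂ) * (f u * ph (f u)) by ring, mul_ph]
      · simp only [hgdef, Set.indicator_of_notMem hu]
        ring
    have : (∫ u in Set.Ici (0:ℝ), f u * g u)
        = (c : ℂ) * ∫ u in Set.Ici (0:ℝ), B.indicator (fun u => ((‖f u‖ : ℝ) : ℂ)) u := by
      simp_rw [hfg]
      exact integral_const_mul _ _
    rw [this, integral_indicator hB]
    have : (∫ u in B, ((‖f u‖ : ℝ) : ℂ) ∂mu) = ((∫ u in B, ‖f u‖ ∂mu : ℝ) : ℂ) :=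
      integral_ofReal
    rw [this]
    rw [show (c:ℂ) * ((∫ u in B, ‖f u‖ ∂mu : ℝ) : ℂ) = ((c * ∫ u in B, ‖f u‖ ∂mu : ℝ) : ℂ) by
      push_cast; ring]
    rw [Complex.norm_real, Real.norm_eq_abs, abs_of_nonneg]
    exact mul_nonneg hc (integral_nonneg (fun u => norm_nonneg _))

lemma upper_generic {f : ℝ → ℂ} (hf : MemJ f) {t κ c : ℝ} (ht : 0 < t) (hκ : 0 < κ)
    (hc : 0 ≤ c)
    (h1 : κ * essSup (fun u => ‖f u‖) mu ≤ c)
    (h2 : κ * (∫ u in Set.Ici (0:ℝ), ‖f u‖) ≤ c * t)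
    {g : ℝ → ℂ} (hg : MemJ g) (hky : (∫ s in (0:ℝ)..t, decRearr g s) ≤ κ) :
    ‖∫ u in Set.Ici (0:ℝ), f u * g u‖ ≤ c :=
  main_upper hf hg ht hκ hc (kyfan_constraint hg ht hky) h1 h2

lemma supp_construct {f : ℝ → ℂ} (hf : MemJ f) {c : ℝ} (hc : 0 ≤ c) :
    ∃ g : ℝ → ℂ, MemJ g ∧
      (∀ t : ℝ, 0 < t → (∫ s in (0:ℝ)..t, decRearr g s) ≤ c * t) ∧
      ‖∫ u in Set.Ici (0:ℝ), f u * g u‖ = c * ∫ u in Set.Ici (0:ℝ), ‖f u‖ := by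
  obtain ⟨g, h1, h2, h3⟩ := construct hf (memJ_support_measurable hf) subset_rfl hf.2.2 hc
  refine ⟨g, h1, fun t ht => ?_, ?_⟩
  · refine le_trans (h2 t ht) ?_
    exact mul_le_mul_of_nonneg_left (min_le_left _ _) hc
  · rw [h3]
    congr 1
    exact setIntegral_eq_integral_of_forall_compl_eq_zero
      (fun x hx => by simpa [Function.mem_support, not_not] using hx)

lemma beta_construct {f : ℝ → ℂ} (hf : MemJ f) {β : ℝ} (hβ0 : 0 < β)
    (hβM : β < essSup (fun u => ‖f u‖) mu) {t c0 : ℝ} (ht : 0 < t) (hc0 : 0 < c0) :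
    ∃ g : ℝ → ℂ, MemJ g ∧ (∫ s in (0:ℝ)..t, decRearr g s) ≤ c0 ∧
      c0 * β ≤ ‖∫ u in Set.Ici (0:ℝ), f u * g u‖ := by
  set B := {u : ℝ | β < ‖f u‖} with hBdef
  have hBm : MeasurableSet B := hf.1.norm measurableSet_Ioi
  have hBsupp : B ⊆ Function.support f := by
    intro u hu
    rw [Function.mem_support]
    intro h0
    rw [hBdef] at hu
    simp only [Set.mem_setOf_eq, h0, norm_zero] at hu
    linarith
  have hBfin : mu B < ⊤ := lt_of_le_of_lt (measure_mono hBsupp) hf.2.2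
  have hBpos : mu B ≠ 0 := meas_pos_of_lt_essSup hf hβM
  set b' := (mu B).toReal with hb'def
  have hb' : 0 < b' := ENNReal.toReal_pos hBpos hBfin.ne
  set m := min t b' with hmdef
  have hm : 0 < m := lt_min ht hb'
  set c := c0 / m with hcdef
  have hc : 0 ≤ c := by positivity
  obtain ⟨g, hgmem, hgky, hgval⟩ := construct hf hBm hBsupp hBfin hc
  refine ⟨g, hgmem, ?_, ?_⟩
  · refine le_trans (hgky t ht) ?_
    rw [hcdef, div_mul_cancel₀ _ hm.ne']
  · rw [hgval]
    have hint : β * b' ≤ ∫ u in B, ‖f u‖ ∂mu := by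
      have hconst : IntegrableOn (fun _ : ℝ => β) B mu :=
        integrableOn_const hBfin.ne
      calc β * b' = ∫ _ in B, β ∂mu := by
            rw [setIntegral_const, smul_eq_mul]; exact mul_comm _ _
        _ ≤ ∫ u in B, ‖f u‖ ∂mu := by
            refine setIntegral_mono_on hconst
              ((memJ_integrable hf).norm.integrableOn) hBm ?_
            intro u hu
            exact (hu : β < ‖f u‖).le
    have key : c0 * β ≤ c * (β * b') := by
      rw [hcdef, div_mul_eq_mul_div, le_div_iff₀ hm]
      have hmb : m ≤ b' := min_le_right _ _
      nlinarith [mul_le_mul_of_nonneg_left hmb (mul_nonneg hc0.le hβ0.le)]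
    calc c0 * β ≤ c * (β * b') := key
      _ ≤ c * ∫ u in B, ‖f u‖ ∂mu := mul_le_mul_of_nonneg_left hint hc

end KFaux

/- The dual norms of the Ky Fan `t`-th norms on `J = J(L^∞[0,∞))`: for `f ∈ J`,
(i) for `t ∈ (0,1]` the dual of `g ↦ (1/t)∫₀ᵗ g*` is `max{t⬝esssup|f|, ∫|f|}`;
(ii) for `t ∈ (1,∞)` the dual of `g ↦ ∫₀ᵗ g*` is `max{esssup|f|, (1/t)∫|f|}`. -/
open KFaux in
/-- The dual norms of the Ky Fan `t`-th norms on `J = J(L^∞[0,∞))`: for `f ∈ J`,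
(i) for `t ∈ (0,1]` the dual of `g ↦ (1/t)∫₀ᵗ g*` is `max{t⬝esssup|f|, ∫|f|}`;
(ii) for `t ∈ (1,∞)` the dual of `g ↦ ∫₀ᵗ g*` is `max{esssup|f|, (1/t)∫|f|}`. -/
theorem dual_kyFan_norms (f : ℝ → ℂ) (hf : MemJ f) :
    (∀ t : ℝ, t ∈ Set.Ioc (0:ℝ) 1 →
      sSup {r : ℝ | ∃ g : ℝ → ℂ, MemJ g ∧ (1 / t) * (∫ s in (0:ℝ)..t, decRearr g s) ≤ 1 ∧
          r = ‖∫ u in Set.Ici (0:ℝ), f u * g u‖} =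
        max (t * essSup (fun u => ‖f u‖) (volume.restrict (Set.Ici (0:ℝ))))
          (∫ u in Set.Ici (0:ℝ), ‖f u‖)) ∧
    (∀ t : ℝ, t ∈ Set.Ioi (1:ℝ) →
      sSup {r : ℝ | ∃ g : ℝ → ℂ, MemJ g ∧ (∫ s in (0:ℝ)..t, decRearr g s) ≤ 1 ∧
          r = ‖∫ u in Set.Ici (0:ℝ), f u * g u‖} =
        max (essSup (fun u => ‖f u‖) (volume.restrict (Set.Ici (0:ℝ))))
          ((1 / t) * ∫ u in Set.Ici (0:ℝ), ‖f u‖)) := by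
  have hI0 : (0:ℝ) ≤ ∫ u in Set.Ici (0:ℝ), ‖f u‖ :=
    integral_nonneg (fun u => norm_nonneg _)
  set M := essSup (fun u => ‖f u‖) (volume.restrict (Set.Ici (0:ℝ))) with hMdef
  set I := ∫ u in Set.Ici (0:ℝ), ‖f u‖ with hIdef
  constructor
  · -- part (i)
    rintro t ⟨ht0, _⟩
    have hcnn : (0:ℝ) ≤ max (t * M) I := le_trans hI0 (le_max_right _ _)
    have hub : ∀ r ∈ {r : ℝ | ∃ g : ℝ → ℂ, MemJ g ∧
        (1 / t) * (∫ s in (0:ℝ)..t, decRearr g s) ≤ 1 ∧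
        r = ‖∫ u in Set.Ici (0:ℝ), f u * g u‖}, r ≤ max (t * M) I := by
      rintro r ⟨g, hg, hky, rfl⟩
      have hky' : (∫ s in (0:ℝ)..t, decRearr g s) ≤ t := by
        rw [one_div_mul_eq_div, div_le_one ht0] at hky
        exact hky
      refine upper_generic hf ht0 ht0 hcnn (le_max_left _ _) ?_ hg hky'
      calc t * I ≤ t * max (t * M) I :=
            mul_le_mul_of_nonneg_left (le_max_right _ _) ht0.le
        _ = max (t * M) I * t := mul_comm _ _
    have hbdd : BddAbove {r : ℝ | ∃ g : ℝ → ℂ, MemJ g ∧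
        (1 / t) * (∫ s in (0:ℝ)..t, decRearr g s) ≤ 1 ∧
        r = ‖∫ u in Set.Ici (0:ℝ), f u * g u‖} := ⟨max (t * M) I, hub⟩
    have hmemI : I ∈ {r : ℝ | ∃ g : ℝ → ℂ, MemJ g ∧
        (1 / t) * (∫ s in (0:ℝ)..t, decRearr g s) ≤ 1 ∧
        r = ‖∫ u in Set.Ici (0:ℝ), f u * g u‖} := by
      obtain ⟨g, hg, hkys, hval⟩ := supp_construct hf (c := 1) zero_le_one
      refine ⟨g, hg, ?_, ?_⟩
      · have h1 : (∫ s in (0:ℝ)..t, decRearr g s) ≤ t := by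
          simpa using hkys t ht0
        rw [one_div_mul_eq_div, div_le_one ht0]
        exact h1
      · rw [hval, one_mul]
    refine le_antisymm (Real.sSup_le hub hcnn) (max_le ?_ (le_csSup hbdd hmemI))
    refine le_of_forall_lt (fun x hx => ?_)
    rcases lt_or_ge x 0 with hx0 | hx0
    · exact lt_of_lt_of_le hx0 (le_trans hI0 (le_csSup hbdd hmemI))
    · have hMpos : 0 < M := by nlinarith
      have hxt : x / t < M := by
        rw [div_lt_iff₀ ht0]
        nlinarith
      have hxtnn : 0 ≤ x / t := div_nonneg hx0 ht0.le
      set β := (x / t + M) / 2 with hβdef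
      have hβ0 : 0 < β := by rw [hβdef]; linarith
      have hβM : β < M := by rw [hβdef]; linarith
      have hxβ : x / t < β := by rw [hβdef]; linarith
      obtain ⟨g, hg, hky, hval⟩ := beta_construct hf hβ0 hβM ht0 ht0
      have hmem : ‖∫ u in Set.Ici (0:ℝ), f u * g u‖ ∈ {r : ℝ | ∃ g : ℝ → ℂ, MemJ g ∧
          (1 / t) * (∫ s in (0:ℝ)..t, decRearr g s) ≤ 1 ∧
          r = ‖∫ u in Set.Ici (0:ℝ), f u * g u‖} := by
        refine ⟨g, hg, ?_, rfl⟩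
        rw [one_div_mul_eq_div, div_le_one ht0]
        exact hky
      calc x = t * (x / t) := by field_simp
        _ < t * β := by exact mul_lt_mul_of_pos_left hxβ ht0
        _ ≤ ‖∫ u in Set.Ici (0:ℝ), f u * g u‖ := hval
        _ ≤ _ := le_csSup hbdd hmem
  · -- part (ii)
    rintro t ht
    have ht1 : (1:ℝ) < t := ht
    have ht0 : (0:ℝ) < t := lt_trans one_pos ht1
    have hIt0 : (0:ℝ) ≤ (1 / t) * I := by positivity
    have hcnn : (0:ℝ) ≤ max M ((1 / t) * I) := le_trans hIt0 (le_max_right _ _)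
    have hub : ∀ r ∈ {r : ℝ | ∃ g : ℝ → ℂ, MemJ g ∧
        (∫ s in (0:ℝ)..t, decRearr g s) ≤ 1 ∧
        r = ‖∫ u in Set.Ici (0:ℝ), f u * g u‖}, r ≤ max M ((1 / t) * I) := by
      rintro r ⟨g, hg, hky, rfl⟩
      refine upper_generic hf ht0 one_pos hcnn ?_ ?_ hg hky
      · rw [one_mul]; exact le_max_left _ _
      · rw [one_mul]
        calc I = ((1 / t) * I) * t := by field_simp
          _ ≤ max M ((1 / t) * I) * t :=
            mul_le_mul_of_nonneg_right (le_max_right _ _) ht0.le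
    have hbdd : BddAbove {r : ℝ | ∃ g : ℝ → ℂ, MemJ g ∧
        (∫ s in (0:ℝ)..t, decRearr g s) ≤ 1 ∧
        r = ‖∫ u in Set.Ici (0:ℝ), f u * g u‖} := ⟨max M ((1 / t) * I), hub⟩
    have hmemI : (1 / t) * I ∈ {r : ℝ | ∃ g : ℝ → ℂ, MemJ g ∧
        (∫ s in (0:ℝ)..t, decRearr g s) ≤ 1 ∧
        r = ‖∫ u in Set.Ici (0:ℝ), f u * g u‖} := by
      obtain ⟨g, hg, hkys, hval⟩ := supp_construct hf (c := 1 / t) (by positivity)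
      refine ⟨g, hg, ?_, hval.symm⟩
      calc (∫ s in (0:ℝ)..t, decRearr g s) ≤ (1 / t) * t := hkys t ht0
        _ = 1 := by field_simp
    refine le_antisymm (Real.sSup_le hub hcnn) (max_le ?_ (le_csSup hbdd hmemI))
    refine le_of_forall_lt (fun x hx => ?_)
    rcases lt_or_ge x 0 with hx0 | hx0
    · exact lt_of_lt_of_le hx0 (le_trans hIt0 (le_csSup hbdd hmemI))
    · set β := (x + M) / 2 with hβdef
      have hβ0 : 0 < β := by rw [hβdef]; linarith
      have hβM : β < M := by rw [hβdef]; linarith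
      have hxβ : x < β := by rw [hβdef]; linarith
      obtain ⟨g, hg, hky, hval⟩ := beta_construct hf hβ0 hβM ht0 one_pos
      have hmem : ‖∫ u in Set.Ici (0:ℝ), f u * g u‖ ∈ {r : ℝ | ∃ g : ℝ → ℂ, MemJ g ∧
          (∫ s in (0:ℝ)..t, decRearr g s) ≤ 1 ∧
          r = ‖∫ u in Set.Ici (0:ℝ), f u * g u‖} := ⟨g, hg, hky, rfl⟩
      calc x < β := hxβ
        _ = 1 * β := (one_mul β).symm
        _ ≤ ‖∫ u in Set.Ici (0:ℝ), f u * g u‖ := hval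
        _ ≤ _ := le_csSup hbdd hmem
end

section
/- Let N be a symmetric gauge norm on c₀₀, the space of finitely supported complex sequences, and define the dual norm N#(x) = sup{ |Σ_n x_n y_n| : y ∈ c₀₀, N(y) ≤ 1 }. Then N# is finite on c₀₀ and is again a symmetric gauge norm on c₀₀, and the second dual satisfies N##(x) = N(x) for all x ∈ c₀₀. Moreover, if N is normalized then N# is normalized. -/
/-- The coordinatewise absolute value of a finitely supported complex sequence. -/
noncomputable def absF (x : ℕ →₀ ℂ) : ℕ →₀ ℂ :=
  x.mapRange (fun z => (‖z‖ : ℂ)) (by simp)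

/-- `N` is a symmetric gauge norm on `c₀₀`, the space of finitely supported complex
sequences. -/
structure IsSymmGaugeNorm (N : (ℕ →₀ ℂ) → ℝ) : Prop where
  add_le : ∀ x y : ℕ →₀ ℂ, N (x + y) ≤ N x + N y
  smul_eq : ∀ (c : ℂ) (x : ℕ →₀ ℂ), N (c • x) = ‖c‖ * N x
  eq_zero : ∀ x : ℕ →₀ ℂ, N x = 0 → x = 0
  gauge : ∀ x : ℕ →₀ ℂ, N (absF x) = N x
  symm : ∀ (σ : Equiv.Perm ℕ) (x : ℕ →₀ ℂ), N (Finsupp.equivMapDomain σ x) = N x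

/-- The dual norm of `N` on `c₀₀` with respect to the pairing `(x, y) ↦ Σ_n x_n y_n`. -/
noncomputable def dualNorm (N : (ℕ →₀ ℂ) → ℝ) (x : ℕ →₀ ℂ) : ℝ :=
  sSup {r : ℝ | ∃ y : ℕ →₀ ℂ, N y ≤ 1 ∧ r = ‖∑ n ∈ x.support, x n * y n‖}

namespace SGN

variable {N : (ℕ →₀ ℂ) → ℝ}

lemma absF_apply (x : ℕ →₀ ℂ) (n : ℕ) : absF x n = (‖x n‖ : ℂ) :=
  Finsupp.mapRange_apply

lemma N_zero (hN : IsSymmGaugeNorm N) : N 0 = 0 := by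
  have h := hN.smul_eq 0 0
  simpa using h

lemma N_nonneg (hN : IsSymmGaugeNorm N) (x : ℕ →₀ ℂ) : 0 ≤ N x := by
  have h1 := hN.add_le x (-x)
  have h2 : N (-x) = N x := by
    have := hN.smul_eq (-1) x
    simpa using this
  have h3 : x + -x = 0 := add_neg_cancel x
  rw [h3, N_zero hN, h2] at h1
  linarith

lemma N_congr_abs (hN : IsSymmGaugeNorm N) {a b : ℕ →₀ ℂ}
    (h : ∀ n, ‖a n‖ = ‖b n‖) : N a = N b := by
  rw [← hN.gauge a, ← hN.gauge b]
  congr 1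
  ext n
  rw [absF_apply, absF_apply, h n]

lemma N_single_le (hN : IsSymmGaugeNorm N) (x : ℕ →₀ ℂ) (n : ℕ) :
    N (Finsupp.single n (x n)) ≤ N x := by
  set s : ℕ →₀ ℂ := (2 : ℂ) • Finsupp.single n (x n) - x with hs
  have habs : ∀ m, ‖s m‖ = ‖x m‖ := by
    intro m
    by_cases h : m = n
    · subst h
      simp only [hs, Finsupp.sub_apply, Finsupp.smul_apply, Finsupp.single_eq_same,
        smul_eq_mul]
      congr 1
      ring
    · simp only [hs, Finsupp.sub_apply, Finsupp.smul_apply,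
        Finsupp.single_eq_of_ne' (Ne.symm h), smul_eq_mul, mul_zero, zero_sub, norm_neg]
  have hNs : N s = N x := N_congr_abs hN habs
  have heq : Finsupp.single n (x n) = ((2 : ℂ)⁻¹) • (x + s) := by
    ext m
    simp only [hs, Finsupp.smul_apply, Finsupp.add_apply, Finsupp.sub_apply, smul_eq_mul]
    ring
  calc N (Finsupp.single n (x n)) = ‖(2:ℂ)⁻¹‖ * N (x + s) := by rw [heq, hN.smul_eq]
    _ ≤ ‖(2:ℂ)⁻¹‖ * (N x + N s) := by
        apply mul_le_mul_of_nonneg_left (hN.add_le x s) (norm_nonneg _)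
    _ = N x := by
        rw [hNs]
        simp
        ring

lemma N_erase_le (hN : IsSymmGaugeNorm N) (x : ℕ →₀ ℂ) (n : ℕ) :
    N (x.erase n) ≤ N x := by
  set s : ℕ →₀ ℂ := x - (2 : ℂ) • Finsupp.single n (x n) with hs
  have habs : ∀ m, ‖s m‖ = ‖x m‖ := by
    intro m
    by_cases h : m = n
    · subst h
      simp only [hs, Finsupp.sub_apply, Finsupp.smul_apply, Finsupp.single_eq_same,
        smul_eq_mul]
      have : x m - 2 * x m = -(x m) := by ring
      rw [this, norm_neg]
    · simp only [hs, Finsupp.sub_apply, Finsupp.smul_apply,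
        Finsupp.single_eq_of_ne' (Ne.symm h), smul_eq_mul, mul_zero, sub_zero]
  have hNs : N s = N x := N_congr_abs hN habs
  have heq : x.erase n = ((2 : ℂ)⁻¹) • (x + s) := by
    ext m
    by_cases h : m = n
    · subst h
      simp only [hs, Finsupp.erase_same, Finsupp.smul_apply, Finsupp.add_apply,
        Finsupp.sub_apply, Finsupp.single_eq_same, smul_eq_mul]
      ring
    · simp only [hs, Finsupp.erase_ne h, Finsupp.smul_apply, Finsupp.add_apply,
        Finsupp.sub_apply, Finsupp.single_eq_of_ne' (Ne.symm h), smul_eq_mul, mul_zero,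
        sub_zero]
      ring
  calc N (x.erase n) = ‖(2:ℂ)⁻¹‖ * N (x + s) := by rw [heq, hN.smul_eq]
    _ ≤ ‖(2:ℂ)⁻¹‖ * (N x + N s) := by
        apply mul_le_mul_of_nonneg_left (hN.add_le x s) (norm_nonneg _)
    _ = N x := by
        rw [hNs]
        simp
        ring

end SGN

namespace SGN
variable {N : (ℕ →₀ ℂ) → ℝ}

lemma N_filter_le (hN : IsSymmGaugeNorm N) (p : ℕ → Prop) [DecidablePred p] (x : ℕ →₀ ℂ) :
    N (x.filter p) ≤ N x := by
  generalize hc : (x.support.filter fun n => ¬ p n).card = k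
  induction k generalizing x with
  | zero =>
    have hfil : x.filter p = x := by
      ext m
      rw [Finsupp.filter_apply p x m]
      by_cases hm : p m
      · simp [hm]
      · simp only [hm, if_false]
        by_contra hxm
        have hm' : m ∈ x.support.filter fun n => ¬ p n := by
          simp [Finsupp.mem_support_iff, hm]
          exact fun h => hxm h.symm
        rw [Finset.card_eq_zero] at hc
        simp [hc] at hm'
    rw [hfil]
  | succ k ih =>
    have hne : (x.support.filter fun n => ¬ p n).Nonempty := by
      rw [← Finset.card_pos, hc]; omega
    obtain ⟨n, hn⟩ := hne
    simp only [Finset.mem_filter, Finsupp.mem_support_iff] at hn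
    have heq : x.filter p = (x.erase n).filter p := by
      ext m
      rw [Finsupp.filter_apply p x m, Finsupp.filter_apply p (x.erase n) m]
      by_cases hm : m = n
      · subst hm
        simp [hn.2]
      · rw [Finsupp.erase_ne hm]
    have hcard : ((x.erase n).support.filter fun m => ¬ p m).card = k := by
      rw [Finsupp.support_erase]
      have : (x.support.erase n).filter (fun m => ¬ p m)
          = (x.support.filter fun m => ¬ p m).erase n := by rw [Finset.filter_erase]
      rw [this, Finset.card_erase_of_mem, hc]
      · simp [Finsupp.mem_support_iff, hn.1, hn.2]
      · simp [Finsupp.mem_support_iff, hn.1, hn.2]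
    calc N (x.filter p) = N ((x.erase n).filter p) := by rw [heq]
      _ ≤ N (x.erase n) := ih _ hcard
      _ ≤ N x := N_erase_le hN x n

lemma N_single_eq (hN : IsSymmGaugeNorm N) (n : ℕ) (c : ℂ) :
    N (Finsupp.single n c) = ‖c‖ * N (Finsupp.single 0 1) := by
  have h1 : Finsupp.single n c = c • Finsupp.single n (1 : ℂ) := by
    rw [Finsupp.smul_single, smul_eq_mul, mul_one]
  have h2 : Finsupp.single n (1 : ℂ)
      = Finsupp.equivMapDomain (Equiv.swap 0 n) (Finsupp.single 0 1) := by
    rw [Finsupp.equivMapDomain_single, Equiv.swap_apply_left]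
  rw [h1, hN.smul_eq, h2, hN.symm]

lemma c_pos (hN : IsSymmGaugeNorm N) : 0 < N (Finsupp.single 0 1) := by
  rcases lt_or_eq_of_le (N_nonneg hN (Finsupp.single 0 1)) with h | h
  · exact h
  · exfalso
    have := hN.eq_zero _ h.symm
    exact one_ne_zero (Finsupp.single_eq_zero.mp this)

lemma coord_le (hN : IsSymmGaugeNorm N) (y : ℕ →₀ ℂ) (n : ℕ) :
    ‖y n‖ * N (Finsupp.single 0 1) ≤ N y := by
  have := N_single_le hN y n
  rwa [N_single_eq hN] at this

end SGN




namespace SGN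
variable {N : (ℕ →₀ ℂ) → ℝ}

def dSet (N : (ℕ →₀ ℂ) → ℝ) (x : ℕ →₀ ℂ) : Set ℝ :=
  {r : ℝ | ∃ y : ℕ →₀ ℂ, N y ≤ 1 ∧ r = ‖∑ n ∈ x.support, x n * y n‖}

lemma dualNorm_eq (x : ℕ →₀ ℂ) : dualNorm N x = sSup (dSet N x) := rfl

lemma zero_mem_dSet (hN : IsSymmGaugeNorm N) (x : ℕ →₀ ℂ) : (0 : ℝ) ∈ dSet N x := by
  refine ⟨0, by rw [N_zero hN]; norm_num, ?_⟩
  simp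

lemma dSet_nonempty (hN : IsSymmGaugeNorm N) (x : ℕ →₀ ℂ) : (dSet N x).Nonempty :=
  ⟨0, zero_mem_dSet hN x⟩

lemma dSet_bddAbove (hN : IsSymmGaugeNorm N) (x : ℕ →₀ ℂ) : BddAbove (dSet N x) := by
  refine ⟨(∑ n ∈ x.support, ‖x n‖) * (N (Finsupp.single 0 1))⁻¹, ?_⟩
  rintro r ⟨y, hy, rfl⟩
  set c := N (Finsupp.single 0 1) with hc
  have hcpos := c_pos hN
  calc ‖∑ n ∈ x.support, x n * y n‖ ≤ ∑ n ∈ x.support, ‖x n * y n‖ := norm_sum_le _ _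
    _ ≤ ∑ n ∈ x.support, ‖x n‖ * c⁻¹ := by
        apply Finset.sum_le_sum
        intro n _
        rw [norm_mul]
        apply mul_le_mul_of_nonneg_left _ (norm_nonneg _)
        have h1 := coord_le hN y n
        rw [← hc] at h1
        have h2 : ‖y n‖ * c ≤ 1 := h1.trans hy
        calc ‖y n‖ = ‖y n‖ * c * c⁻¹ := by rw [mul_assoc, mul_inv_cancel₀ (a := c) (ne_of_gt hcpos), mul_one]
          _ ≤ 1 * c⁻¹ := by
              apply mul_le_mul_of_nonneg_right h2 (inv_nonneg.mpr hcpos.le)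
          _ = c⁻¹ := one_mul _
    _ = (∑ n ∈ x.support, ‖x n‖) * c⁻¹ := by rw [Finset.sum_mul]

lemma le_dualNorm (hN : IsSymmGaugeNorm N) (x y : ℕ →₀ ℂ) (hy : N y ≤ 1) :
    ‖∑ n ∈ x.support, x n * y n‖ ≤ dualNorm N x :=
  le_csSup (dSet_bddAbove hN x) ⟨y, hy, rfl⟩

lemma dualNorm_le (hN : IsSymmGaugeNorm N) (x : ℕ →₀ ℂ) {M : ℝ}
    (h : ∀ y : ℕ →₀ ℂ, N y ≤ 1 → ‖∑ n ∈ x.support, x n * y n‖ ≤ M) :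
    dualNorm N x ≤ M := by
  apply csSup_le (dSet_nonempty hN x)
  rintro r ⟨y, hy, rfl⟩
  exact h y hy

lemma dualNorm_nonneg (hN : IsSymmGaugeNorm N) (x : ℕ →₀ ℂ) : 0 ≤ dualNorm N x :=
  le_csSup (dSet_bddAbove hN x) (zero_mem_dSet hN x)

lemma pair_eq_of_subset (x y : ℕ →₀ ℂ) {T : Finset ℕ} (hT : x.support ⊆ T) :
    ∑ n ∈ T, x n * y n = ∑ n ∈ x.support, x n * y n := by
  apply (Finset.sum_subset hT _).symm
  intro n _ hn
  rw [Finsupp.notMem_support_iff] at hn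
  rw [hn, zero_mul]

end SGN

namespace SGN
variable {N : (ℕ →₀ ℂ) → ℝ}

lemma dualNorm_zero (hN : IsSymmGaugeNorm N) : dualNorm N 0 = 0 := by
  apply le_antisymm
  · apply dualNorm_le hN
    intro y hy
    simp
  · exact dualNorm_nonneg hN 0

lemma dualNorm_add_le (hN : IsSymmGaugeNorm N) (x y : ℕ →₀ ℂ) :
    dualNorm N (x + y) ≤ dualNorm N x + dualNorm N y := by
  apply dualNorm_le hN
  intro z hz
  have hsub : (x + y).support ⊆ x.support ∪ y.support := Finsupp.support_add
  have h1 : ∑ n ∈ (x + y).support, (x + y) n * z n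
      = ∑ n ∈ x.support ∪ y.support, (x + y) n * z n :=
    (pair_eq_of_subset (x + y) z hsub).symm
  have h2 : ∑ n ∈ x.support ∪ y.support, (x + y) n * z n
      = ∑ n ∈ x.support, x n * z n + ∑ n ∈ y.support, y n * z n := by
    rw [← pair_eq_of_subset x z (Finset.subset_union_left),
      ← pair_eq_of_subset y z (Finset.subset_union_right), ← Finset.sum_add_distrib]
    apply Finset.sum_congr rfl
    intro n _
    simp [Finsupp.add_apply]
    ring
  rw [h1, h2]
  calc ‖∑ n ∈ x.support, x n * z n + ∑ n ∈ y.support, y n * z n‖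
      ≤ ‖∑ n ∈ x.support, x n * z n‖ + ‖∑ n ∈ y.support, y n * z n‖ := norm_add_le _ _
    _ ≤ dualNorm N x + dualNorm N y :=
        add_le_add (le_dualNorm hN x z hz) (le_dualNorm hN y z hz)

lemma dualNorm_smul (hN : IsSymmGaugeNorm N) (c : ℂ) (x : ℕ →₀ ℂ) :
    dualNorm N (c • x) = ‖c‖ * dualNorm N x := by
  rcases eq_or_ne c 0 with rfl | hc
  · rw [zero_smul, dualNorm_zero hN]
    simp
  · have hsupp : (c • x).support = x.support := Finsupp.support_smul_eq hc
    have hpair : ∀ y : ℕ →₀ ℂ,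
        ∑ n ∈ (c • x).support, (c • x) n * y n = c * ∑ n ∈ x.support, x n * y n := by
      intro y
      rw [hsupp, Finset.mul_sum]
      apply Finset.sum_congr rfl
      intro n _
      rw [Finsupp.smul_apply, smul_eq_mul]
      ring
    apply le_antisymm
    · apply dualNorm_le hN
      intro y hy
      rw [hpair y, norm_mul]
      exact mul_le_mul_of_nonneg_left (le_dualNorm hN x y hy) (norm_nonneg c)
    · have h1 : dualNorm N x ≤ ‖c‖⁻¹ * dualNorm N (c • x) := by
        apply dualNorm_le hN
        intro y hy
        have h2 : ‖∑ n ∈ (c • x).support, (c • x) n * y n‖ ≤ dualNorm N (c • x) :=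
          le_dualNorm hN _ y hy
        rw [hpair y, norm_mul] at h2
        have hcpos : (0:ℝ) < ‖c‖ := norm_pos_iff.mpr hc
        rw [← le_inv_mul_iff₀ hcpos] at h2
        exact h2
      have hcpos : (0:ℝ) < ‖c‖ := norm_pos_iff.mpr hc
      calc ‖c‖ * dualNorm N x ≤ ‖c‖ * (‖c‖⁻¹ * dualNorm N (c • x)) :=
            mul_le_mul_of_nonneg_left h1 (norm_nonneg c)
        _ = dualNorm N (c • x) := by
            rw [← mul_assoc, mul_inv_cancel₀ (ne_of_gt hcpos), one_mul]

lemma dualNorm_eq_zero (hN : IsSymmGaugeNorm N) (x : ℕ →₀ ℂ) (h : dualNorm N x = 0) :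
    x = 0 := by
  by_contra hx
  obtain ⟨n, hn⟩ : ∃ n, x n ≠ 0 := by
    by_contra h'
    push_neg at h'
    exact hx (Finsupp.ext h')
  set c := N (Finsupp.single 0 1) with hc
  have hcpos := c_pos hN
  set y : ℕ →₀ ℂ := ((c : ℂ))⁻¹ • Finsupp.single n 1 with hy
  have hNy : N y ≤ 1 := by
    rw [hy, hN.smul_eq, N_single_eq hN]
    simp only [norm_inv, Complex.norm_real, Real.norm_eq_abs, abs_of_pos hcpos, norm_one,
      one_mul]
    rw [abs_of_pos (a := c) hcpos, inv_mul_cancel₀ (a := c) (ne_of_gt hcpos)]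
  have hpair : ∑ m ∈ x.support, x m * y m = x n * (c : ℂ)⁻¹ := by
    rw [Finset.sum_eq_single n]
    · rw [hy]
      simp [Finsupp.single_eq_same]
    · intro m _ hm
      rw [hy]
      simp [Finsupp.single_eq_of_ne' (Ne.symm hm)]
    · intro hns
      exact absurd (Finsupp.mem_support_iff.mpr hn) hns
  have hle := le_dualNorm hN x y hNy
  rw [h, hpair] at hle
  have : (0:ℝ) < ‖x n * (c:ℂ)⁻¹‖ := by
    rw [norm_pos_iff]
    apply mul_ne_zero hn
    simp only [ne_eq, inv_eq_zero, Complex.ofReal_eq_zero]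
    exact ne_of_gt hcpos
  linarith

end SGN

namespace SGN
variable {N : (ℕ →₀ ℂ) → ℝ}

lemma support_absF (x : ℕ →₀ ℂ) : (absF x).support = x.support := by
  ext n
  simp only [Finsupp.mem_support_iff, absF_apply]
  constructor
  · intro h h'
    apply h
    rw [h']
    simp
  · intro h h'
    apply h
    rwa [Complex.ofReal_eq_zero, norm_eq_zero] at h'

lemma exists_twist (hN : IsSymmGaugeNorm N) (u : ℕ → ℂ) (hu : ∀ n, ‖u n‖ = 1)
    (y : ℕ →₀ ℂ) : ∃ y' : ℕ →₀ ℂ, N y' = N y ∧ ∀ n, y' n = u n * y n := by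
  refine ⟨Finsupp.onFinset y.support (fun n => u n * y n) ?_, ?_, fun n => rfl⟩
  · intro n hn
    rw [Finsupp.mem_support_iff]
    intro h
    rw [h, mul_zero] at hn
    exact hn rfl
  · apply N_congr_abs hN
    intro n
    show ‖u n * y n‖ = ‖y n‖
    rw [norm_mul, hu n, one_mul]

lemma dualNorm_absF_le (hN : IsSymmGaugeNorm N) (x : ℕ →₀ ℂ) :
    dualNorm N (absF x) ≤ dualNorm N x := by
  apply dualNorm_le hN
  intro y hy
  set u : ℕ → ℂ := fun n => if x n = 0 then 1 else (‖x n‖ : ℂ) / x n with hu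
  have hu1 : ∀ n, ‖u n‖ = 1 := by
    intro n
    rw [hu]
    by_cases h : x n = 0
    · simp [h]
    · simp only [h, if_false, norm_div, Complex.norm_real, Real.norm_eq_abs,
        abs_norm]
      rw [div_self (norm_ne_zero_iff.mpr h)]
  obtain ⟨y', hNy', hy'⟩ := exists_twist hN u hu1 y
  have hpair : ∑ n ∈ (absF x).support, absF x n * y n = ∑ n ∈ x.support, x n * y' n := by
    rw [support_absF]
    apply Finset.sum_congr rfl
    intro n hn
    rw [Finsupp.mem_support_iff] at hn
    rw [absF_apply, hy' n, hu]
    simp only [hn, if_false]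
    field_simp
  rw [hpair]
  exact le_dualNorm hN x y' (hNy' ▸ hy)

lemma dualNorm_absF (hN : IsSymmGaugeNorm N) (x : ℕ →₀ ℂ) :
    dualNorm N (absF x) = dualNorm N x := by
  apply le_antisymm (dualNorm_absF_le hN x)
  apply dualNorm_le hN
  intro y hy
  set u : ℕ → ℂ := fun n => if x n = 0 then 1 else x n / (‖x n‖ : ℂ) with hu
  have hu1 : ∀ n, ‖u n‖ = 1 := by
    intro n
    rw [hu]
    by_cases h : x n = 0
    · simp [h]
    · simp only [h, if_false, norm_div, Complex.norm_real, Real.norm_eq_abs,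
        abs_norm]
      rw [div_self (norm_ne_zero_iff.mpr h)]
  obtain ⟨y', hNy', hy'⟩ := exists_twist hN u hu1 y
  have hpair : ∑ n ∈ x.support, x n * y n = ∑ n ∈ (absF x).support, absF x n * y' n := by
    rw [support_absF]
    apply Finset.sum_congr rfl
    intro n hn
    rw [Finsupp.mem_support_iff] at hn
    rw [absF_apply, hy' n, hu]
    simp only [hn, if_false]
    have hnz : (‖x n‖ : ℂ) ≠ 0 := by
      simp only [ne_eq, Complex.ofReal_eq_zero, norm_eq_zero]
      exact hn
    rw [div_mul_eq_mul_div, mul_div_assoc', mul_comm ((‖x n‖:ℂ)), mul_div_assoc,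
      div_self hnz, mul_one]
  rw [hpair]
  exact le_dualNorm hN (absF x) y' (hNy' ▸ hy)

lemma support_equivMapDomain (σ : Equiv.Perm ℕ) (x : ℕ →₀ ℂ) :
    (Finsupp.equivMapDomain σ x).support = x.support.map σ.toEmbedding := by
  ext n
  simp only [Finsupp.mem_support_iff, Finsupp.equivMapDomain_apply, Finset.mem_map,
    Equiv.coe_toEmbedding]
  constructor
  · intro h
    exact ⟨σ.symm n, h, σ.apply_symm_apply n⟩
  · rintro ⟨m, hm, rfl⟩
    rwa [Equiv.symm_apply_apply]

lemma dualNorm_perm_le (hN : IsSymmGaugeNorm N) (σ : Equiv.Perm ℕ) (x : ℕ →₀ ℂ) :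
    dualNorm N (Finsupp.equivMapDomain σ x) ≤ dualNorm N x := by
  apply dualNorm_le hN
  intro y hy
  set y' : ℕ →₀ ℂ := Finsupp.equivMapDomain σ.symm y with hy'
  have hNy' : N y' ≤ 1 := by rw [hy', hN.symm]; exact hy
  have hpair : ∑ n ∈ (Finsupp.equivMapDomain σ x).support,
      Finsupp.equivMapDomain σ x n * y n = ∑ n ∈ x.support, x n * y' n := by
    rw [support_equivMapDomain, Finset.sum_map]
    apply Finset.sum_congr rfl
    intro n _
    simp only [Equiv.coe_toEmbedding, Finsupp.equivMapDomain_apply, Equiv.symm_apply_apply,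
      hy', Equiv.symm_symm]
  rw [hpair]
  exact le_dualNorm hN x y' hNy'

lemma dualNorm_perm (hN : IsSymmGaugeNorm N) (σ : Equiv.Perm ℕ) (x : ℕ →₀ ℂ) :
    dualNorm N (Finsupp.equivMapDomain σ x) = dualNorm N x := by
  apply le_antisymm (dualNorm_perm_le hN σ x)
  have h := dualNorm_perm_le hN σ.symm (Finsupp.equivMapDomain σ x)
  have heq : Finsupp.equivMapDomain σ.symm (Finsupp.equivMapDomain σ x) = x := by
    rw [← Finsupp.equivMapDomain_trans]
    simp
  rwa [heq] at h

end SGN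

namespace SGN
variable {N : (ℕ →₀ ℂ) → ℝ}

lemma dualNorm_isSGN (hN : IsSymmGaugeNorm N) : IsSymmGaugeNorm (dualNorm N) :=
  ⟨dualNorm_add_le hN, dualNorm_smul hN, dualNorm_eq_zero hN, dualNorm_absF hN,
    dualNorm_perm hN⟩

lemma pair_comm (x y : ℕ →₀ ℂ) :
    ∑ n ∈ x.support, x n * y n = ∑ n ∈ y.support, y n * x n := by
  rw [← pair_eq_of_subset x y (Finset.subset_union_left (s₂ := y.support)),
    ← pair_eq_of_subset y x (Finset.subset_union_right (s₁ := x.support))]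
  apply Finset.sum_congr rfl
  intro n _
  ring

lemma second_dual_le (hN : IsSymmGaugeNorm N) (x : ℕ →₀ ℂ) :
    dualNorm (dualNorm N) x ≤ N x := by
  apply dualNorm_le (dualNorm_isSGN hN)
  intro y hy
  rcases eq_or_lt_of_le (N_nonneg hN x) with h0 | hpos
  · have hx0 : x = 0 := hN.eq_zero x h0.symm
    subst hx0
    simp only [Finsupp.support_zero, Finset.sum_empty, norm_zero]
    exact h0.le
  · set z : ℕ →₀ ℂ := ((N x : ℂ))⁻¹ • x with hz
    have hNz : N z ≤ 1 := by
      rw [hz, hN.smul_eq]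
      simp only [norm_inv, Complex.norm_real, Real.norm_eq_abs, abs_of_pos hpos]
      rw [inv_mul_cancel₀ (ne_of_gt hpos)]
    have h1 : ‖∑ n ∈ y.support, y n * z n‖ ≤ 1 :=
      (le_dualNorm hN y z hNz).trans hy
    have h2 : ∑ n ∈ y.support, y n * z n
        = ((N x : ℂ))⁻¹ * ∑ n ∈ y.support, y n * x n := by
      rw [Finset.mul_sum]
      apply Finset.sum_congr rfl
      intro n _
      rw [hz, Finsupp.smul_apply, smul_eq_mul]
      ring
    rw [h2, norm_mul] at h1
    have h3 : ‖((N x : ℂ))⁻¹‖ = (N x)⁻¹ := by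
      simp [abs_of_pos hpos]
    rw [h3] at h1
    rw [pair_comm]
    calc ‖∑ n ∈ y.support, y n * x n‖
        = N x * ((N x)⁻¹ * ‖∑ n ∈ y.support, y n * x n‖) := by
          rw [← mul_assoc, mul_inv_cancel₀ (ne_of_gt hpos), one_mul]
      _ ≤ N x * 1 := mul_le_mul_of_nonneg_left h1 hpos.le
      _ = N x := mul_one _

end SGN

namespace SGN
variable {N : (ℕ →₀ ℂ) → ℝ}

lemma second_dual_ge (hN : IsSymmGaugeNorm N) (x : ℕ →₀ ℂ) :
    N x ≤ dualNorm (dualNorm N) x := by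
  classical
  rcases eq_or_ne x 0 with rfl | hx
  · rw [N_zero hN]
    exact dualNorm_nonneg (dualNorm_isSGN hN) 0
  set S := x.support with hS
  set V : Submodule ℂ (ℕ →₀ ℂ) := Finsupp.supported ℂ ℂ (↑S : Set ℕ) with hV
  letI : NormedAddCommGroup V := AddGroupNorm.toNormedAddCommGroup
    { toFun := fun v => N v.1
      map_zero' := N_zero hN
      add_le' := fun v w => hN.add_le v.1 w.1
      neg' := fun v => by
        have h := hN.smul_eq (-1) v.1
        simpa using h
      eq_zero_of_map_eq_zero' := fun v hv => Subtype.ext (hN.eq_zero v.1 hv) }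
  letI : NormedSpace ℂ V :=
    { norm_smul_le := fun c v => le_of_eq (hN.smul_eq c v.1) }
  have hnorm : ∀ v : V, ‖v‖ = N v.1 := fun v => rfl
  have hxV : x ∈ V := by
    show x ∈ Finsupp.supported ℂ ℂ (↑S : Set ℕ)
    rw [Finsupp.mem_supported ℂ x]
  have hxV0 : (⟨x, hxV⟩ : V) ≠ 0 := by
    intro h
    exact hx (by simpa using congrArg Subtype.val h)
  obtain ⟨g, hg1, hgx⟩ := exists_dual_vector ℂ (⟨x, hxV⟩ : V) (norm_ne_zero_iff.mpr hxV0)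
  have hmem : ∀ n ∈ S, Finsupp.single n (1:ℂ) ∈ V := by
    intro n hn
    show Finsupp.single n (1:ℂ) ∈ Finsupp.supported ℂ ℂ (↑S : Set ℕ)
    rw [Finsupp.mem_supported ℂ]
    intro m hm
    rw [Finset.mem_coe, Finsupp.support_single_ne_zero n one_ne_zero,
      Finset.mem_singleton] at hm
    subst hm
    exact hn
  set y : ℕ →₀ ℂ := Finsupp.onFinset S
    (fun n => if h : n ∈ S then g ⟨Finsupp.single n 1, hmem n h⟩ else 0)
    (by
      intro n hn
      by_cases h : n ∈ S
      · exact h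
      · simp [h] at hn) with hy
  have hyval : ∀ n (h : n ∈ S), y n = g ⟨Finsupp.single n 1, hmem n h⟩ := by
    intro n h
    rw [hy]
    show (if h : n ∈ S then g ⟨Finsupp.single n 1, hmem n h⟩ else 0) = _
    rw [dif_pos h]
  have hrep : ∀ (z : ℕ →₀ ℂ) (hz : z ∈ V), ∑ n ∈ S, z n * y n = g ⟨z, hz⟩ := by
    intro z hz
    set f : ℕ → V := fun n =>
      if h : n ∈ S then z n • (⟨Finsupp.single n 1, hmem n h⟩ : V) else 0 with hf
    have hdecomp : (⟨z, hz⟩ : V) = ∑ n ∈ S, f n := by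
      apply Subtype.ext
      have hcoe : ((∑ n ∈ S, f n : V) : ℕ →₀ ℂ) = ∑ n ∈ S, ((f n : V) : ℕ →₀ ℂ) := by
        exact_mod_cast Submodule.coe_sum V f S
      rw [hcoe]
      ext m
      rw [Finsupp.finset_sum_apply]
      have hterm : ∀ n ∈ S, ((f n : V) : ℕ →₀ ℂ) m
          = if n = m then z n else 0 := by
        intro n hn
        rw [hf]
        simp only [dif_pos hn]
        rw [Submodule.coe_smul]
        rw [Finsupp.smul_apply, Finsupp.single_apply, smul_eq_mul]
        by_cases h : n = m <;> simp [h]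
      rw [Finset.sum_congr rfl hterm, Finset.sum_ite_eq' S m (fun n => z n)]
      by_cases hm : m ∈ S
      · simp [hm]
      · simp only [hm, if_false]
        have hz' : (↑z.support : Set ℕ) ⊆ ↑S := (Finsupp.mem_supported ℂ z).mp hz
        by_contra h
        refine hm (Finset.mem_coe.mp (hz' (Finset.mem_coe.mpr ?_)))
        exact Finsupp.mem_support_iff.mpr (fun h' => h (by rw [h']))
    rw [hdecomp, map_sum]
    apply Finset.sum_congr rfl
    intro n hn
    rw [hf]
    simp only [dif_pos hn]
    rw [map_smul, smul_eq_mul, hyval n hn]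
  have hdy : dualNorm N y ≤ 1 := by
    apply dualNorm_le hN
    intro z hz1
    have hysupp : y.support ⊆ S := Finsupp.support_onFinset_subset
    have h1 : ∑ n ∈ S, y n * z n = ∑ n ∈ y.support, y n * z n :=
      pair_eq_of_subset y z hysupp
    set z' : ℕ →₀ ℂ := z.filter (· ∈ S) with hz'
    have hz'V : z' ∈ V := by
      show z' ∈ Finsupp.supported ℂ ℂ (↑S : Set ℕ)
      rw [Finsupp.mem_supported ℂ]
      intro m hm
      have := Finsupp.support_filter (p := (· ∈ S)) (f := z) ▸ hm
      simp only [Finset.coe_filter, Set.mem_setOf_eq] at this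
      exact this.2
    have h2 : ∑ n ∈ S, y n * z n = ∑ n ∈ S, z' n * y n := by
      apply Finset.sum_congr rfl
      intro n hn
      have : z' n = z n := by
        rw [hz', Finsupp.filter_apply, if_pos hn]
      rw [this]
      ring
    rw [← h1, h2, hrep z' hz'V]
    calc ‖g ⟨z', hz'V⟩‖ ≤ ‖g‖ * ‖(⟨z', hz'V⟩ : V)‖ := g.le_opNorm _
      _ = N z' := by rw [hg1, one_mul, hnorm]
      _ ≤ N z := N_filter_le hN _ z
      _ ≤ 1 := hz1
  have hNx : ‖∑ n ∈ x.support, x n * y n‖ = N x := by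
    have h := hrep x hxV
    rw [hS] at h
    rw [h, hgx, hnorm]
    rw [RCLike.norm_ofReal]
    exact abs_of_nonneg (N_nonneg hN x)
  have hfin := le_dualNorm (dualNorm_isSGN hN) x y hdy
  rwa [hNx] at hfin

end SGN

namespace SGN
variable {N : (ℕ →₀ ℂ) → ℝ}

lemma dualNorm_normalized (hN : IsSymmGaugeNorm N) (h1 : N (Finsupp.single 0 1) = 1) :
    dualNorm N (Finsupp.single 0 1) = 1 := by
  apply le_antisymm
  · apply dualNorm_le hN
    intro y hy
    have hsupp : (Finsupp.single 0 (1:ℂ)).support = {0} :=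
      Finsupp.support_single_ne_zero 0 one_ne_zero
    rw [hsupp, Finset.sum_singleton, Finsupp.single_eq_same, one_mul]
    have := coord_le hN y 0
    rw [h1, mul_one] at this
    exact this.trans hy
  · have hle := le_dualNorm hN (Finsupp.single 0 1) (Finsupp.single 0 1) h1.le
    have hsupp : (Finsupp.single 0 (1:ℂ)).support = {0} :=
      Finsupp.support_single_ne_zero 0 one_ne_zero
    rw [hsupp, Finset.sum_singleton, Finsupp.single_eq_same, mul_one, norm_one] at hle
    exact hle

end SGN


/-- If `N` is a symmetric gauge norm on `c₀₀` then its dual norm `N#` is finite on `c₀₀`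
and is again a symmetric gauge norm, the second dual satisfies `N## = N`, and if `N` is
normalized then so is `N#`. -/
theorem dualNorm_isSymmGaugeNorm_and_second_dual (N : (ℕ →₀ ℂ) → ℝ)
    (hN : IsSymmGaugeNorm N) :
    (∀ x : ℕ →₀ ℂ, BddAbove {r : ℝ | ∃ y : ℕ →₀ ℂ, N y ≤ 1 ∧
        r = ‖∑ n ∈ x.support, x n * y n‖}) ∧
    IsSymmGaugeNorm (dualNorm N) ∧
    (∀ x : ℕ →₀ ℂ, dualNorm (dualNorm N) x = N x) ∧
    (N (Finsupp.single 0 1) = 1 → dualNorm N (Finsupp.single 0 1) = 1) := by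
  refine ⟨fun x => SGN.dSet_bddAbove hN x, SGN.dualNorm_isSGN hN,
    fun x => le_antisymm (SGN.second_dual_le hN x) (SGN.second_dual_ge hN x),
    fun h => SGN.dualNorm_normalized hN h⟩
end
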